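/- arXiv:1902.06030 — 12 statements merged into one kernel-verified Lean document; each statement's English description precedes it below -/
import Mathlib

section
/- For any infinite cardinal κ, the order dimension of the poset of finite subsets of κ ordered by inclusion is exactly log₂(log₂(κ)), where log₂(μ) = min{λ : 2^λ ≥ μ}. -/
open Cardinal
open scoped symmDiff

universe u

/-- `L` is a realizer of the partial order on `P`: a family of linear orders
whose intersection is exactly `≤`. -/
def IsRealizer (P : Type u) [PartialOrder P] {ι : Type u} (L : ι → P → P → Prop) : Prop :=
  (∀ i, IsLinearOrder P (L i)) ∧ ∀ x y : P, x ≤ y ↔ ∀ i, L i x y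

/-- The order dimension of a partial order: the least cardinality of a realizer. -/
noncomputable def orderDim (P : Type u) [PartialOrder P] : Cardinal.{u} :=
  sInf { c | ∃ (ι : Type u) (L : ι → P → P → Prop), #ι = c ∧ IsRealizer P L }

/-- `clog2 μ = min {λ : μ ≤ 2^λ}`. -/
noncomputable def clog2 (μ : Cardinal.{u}) : Cardinal.{u} := sInf { l | μ ≤ 2 ^ l }

/-! ### Auxiliary lemmas -/

lemma le_two_pow_clog2 (μ : Cardinal.{u}) : μ ≤ 2 ^ clog2 μ := by
  have h : sInf { l : Cardinal.{u} | μ ≤ 2 ^ l } ∈ { l : Cardinal.{u} | μ ≤ 2 ^ l } :=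
    csInf_mem ⟨μ, show μ ∈ { l : Cardinal.{u} | μ ≤ 2 ^ l } from (Cardinal.cantor μ).le⟩
  exact h

lemma clog2_le {μ l : Cardinal.{u}} (h : μ ≤ 2 ^ l) : clog2 μ ≤ l :=
  csInf_le (OrderBot.bddBelow _) h

lemma aleph0_le_clog2 {μ : Cardinal.{u}} (h : ℵ₀ ≤ μ) : ℵ₀ ≤ clog2 μ := by
  refine le_csInf ⟨μ, (Cardinal.cantor μ).le⟩ (fun l hl => ?_)
  by_contra hlt
  push_neg at hlt
  have h2 : (2 : Cardinal.{u}) ^ l < ℵ₀ :=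
    Cardinal.power_lt_aleph0 (by exact_mod_cast Cardinal.nat_lt_aleph0 2) hlt
  exact absurd (h.trans hl) h2.not_ge

/-! ### Lower bound: a realizer of size `c` forces `#X ≤ 2 ^ 2 ^ c` -/

lemma realizer_card_bound {X ι : Type u} (L : ι → Finset X → Finset X → Prop)
    (h : IsRealizer (Finset X) L) : #X ≤ 2 ^ ((2 : Cardinal.{u}) ^ #ι) := by
  classical
  have tot : ∀ i x y, L i x y ∨ L i y x := fun i x y => (h.1 i).toTotal.total x y
  have tr : ∀ i {x y z}, L i x y → L i y z → L i x z := fun i {x y z} hxy hyz =>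
    (h.1 i).toIsPartialOrder.toIsPreorder.toIsTrans.trans x y z hxy hyz
  have anti : ∀ i {x y}, L i x y → L i y x → x = y := fun i {x y} hxy hyx =>
    (h.1 i).toIsPartialOrder.toAntisymm.antisymm x y hxy hyx
  have sub : ∀ {x y : Finset X}, x ⊆ y → ∀ i, L i x y := fun {x y} hxy i =>
    ((h.2 x y).1 (Finset.le_iff_subset.2 hxy)) i
  have nsub : ∀ {x y : Finset X}, ¬x ⊆ y → ∃ i, L i y x ∧ ¬L i x y := by
    intro x y hxy
    have hn : ¬∀ i, L i x y := fun hall => hxy (Finset.le_iff_subset.1 ((h.2 x y).2 hall))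
    push_neg at hn
    obtain ⟨i, hi⟩ := hn
    exact ⟨i, (tot i x y).resolve_left hi, hi⟩
  have hcard : #(Set (Set ι)) = 2 ^ ((2 : Cardinal.{u}) ^ #ι) := by
    rw [Cardinal.mk_set, Cardinal.mk_set]
  rw [← hcard]
  refine Cardinal.mk_le_of_injective
    (f := fun b : X => {s : Set ι | ∃ a : X, a ≠ b ∧ s = {i | L i {a} {b}}}) ?_
  intro b₁ b₂ hb
  by_contra hne
  have ht2 : {i | L i {b₁} {b₂}} ∈ {s : Set ι | ∃ a : X, a ≠ b₂ ∧ s = {i | L i {a} {b₂}}} :=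
    ⟨b₁, hne, rfl⟩
  have hb' : {s : Set ι | ∃ a : X, a ≠ b₁ ∧ s = {i | L i {a} {b₁}}}
      = {s : Set ι | ∃ a : X, a ≠ b₂ ∧ s = {i | L i {a} {b₂}}} := hb
  rw [← hb'] at ht2
  obtain ⟨a, hab₁, hts⟩ := ht2
  have hiff : ∀ i, L i {b₁} {b₂} ↔ L i {a} {b₁} := by
    intro i
    have := congrArg (fun s : Set ι => i ∈ s) hts
    simpa using this
  by_cases hab₂ : a = b₂
  · subst hab₂
    have h1 : ¬({b₁} : Finset X) ⊆ {a} := by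
      simp only [Finset.singleton_subset_iff, Finset.mem_singleton]
      exact hne
    obtain ⟨i, hi1, hi2⟩ := nsub h1
    exact hi2 ((hiff i).2 hi1)
  · have h1 : ¬({b₁} : Finset X) ⊆ {a, b₂} := by
      simp only [Finset.singleton_subset_iff, Finset.mem_insert, Finset.mem_singleton]
      push_neg
      exact ⟨fun hh => hab₁ hh.symm, hne⟩
    obtain ⟨i, hi1, hi2⟩ := nsub h1
    have ha1 : L i {a} {b₁} := tr i (sub (by simp) i) hi1
    have hb21 : L i {b₂} {b₁} := tr i (sub (by simp) i) hi1
    have hb12 : L i {b₁} {b₂} := (hiff i).2 ha1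
    exact hne (Finset.singleton_injective (anti i hb12 hb21))

/-! ### Upper bound construction -/

section Construction

variable {Y Λ : Type u}

/-- Separating a finite family of sets by a finite set of points. -/
lemma exists_sep (Δ : Finset (Set Λ)) :
    ∃ d : Finset Λ, ∀ s ∈ Δ, ∀ t ∈ Δ, (∀ x ∈ d, x ∈ s ↔ x ∈ t) → s = t := by
  classical
  refine ⟨Δ.biUnion (fun s => Δ.biUnion (fun t =>
    if h : (s ∆ t).Nonempty then {h.choose} else ∅)), ?_⟩
  intro s hs t ht hag
  by_contra hne
  have hne' : (s ∆ t).Nonempty := Set.symmDiff_nonempty.2 hne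
  have hx : hne'.choose ∈ s ∆ t := hne'.choose_spec
  have hxd : hne'.choose ∈ Δ.biUnion (fun s => Δ.biUnion (fun t =>
      if h : (s ∆ t).Nonempty then {h.choose} else ∅)) := by
    refine Finset.mem_biUnion.2 ⟨s, hs, Finset.mem_biUnion.2 ⟨t, ht, ?_⟩⟩
    rw [dif_pos hne']
    exact Finset.mem_singleton_self _
  have := hag _ hxd
  rw [Set.mem_symmDiff] at hx
  tauto

/-- The "twist" set attached to an index `(d, E)`. -/
def iMask (i : Finset Λ × Finset (Finset Λ)) : Set (Set Λ) :=
  {t | ∃ e ∈ i.2, ∀ x ∈ i.1, x ∈ e ↔ x ∈ t}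

/-- The strict linear order on `Y` induced by index `i`: compare `g a` and `g b` at the
`WellOrderingRel`-least element of their symmetric difference, with direction twisted by
`iMask i`. -/
def SRel (g : Y ↪ Set (Set Λ)) (i : Finset Λ × Finset (Finset Λ)) (a b : Y) : Prop :=
  ∃ δ ∈ (g a) ∆ (g b), (δ ∈ g b ↔ δ ∉ iMask i) ∧ ∀ t, WellOrderingRel t δ → t ∉ (g a) ∆ (g b)

lemma SRel_irrefl (g : Y ↪ Set (Set Λ)) (i) : ∀ a : Y, ¬SRel g i a a := by
  rintro a ⟨δ, hδ, -, -⟩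
  rw [symmDiff_self] at hδ
  exact hδ

lemma SRel_trichotomous (g : Y ↪ Set (Set Λ)) (i) :
    ∀ a b : Y, SRel g i a b ∨ a = b ∨ SRel g i b a := by
  intro a b
  by_cases hab : a = b
  · exact Or.inr (Or.inl hab)
  have hne : ((g a) ∆ (g b)).Nonempty :=
    Set.symmDiff_nonempty.2 (fun hgg => hab (g.injective hgg))
  have wf := (WellOrderingRel.isWellOrder (α := Set Λ)).toIsWellFounded.wf
  set δ := wf.min _ hne with hδdef
  have hmem : δ ∈ (g a) ∆ (g b) := wf.min_mem _ hne
  have hmin : ∀ t, WellOrderingRel t δ → t ∉ (g a) ∆ (g b) := fun t ht hts =>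
    wf.not_lt_min _ hts ht
  by_cases hsgn : δ ∈ g b ↔ δ ∉ iMask i
  · exact Or.inl ⟨δ, hmem, hsgn, hmin⟩
  · refine Or.inr (Or.inr ⟨δ, ?_, ?_, ?_⟩)
    · rwa [symmDiff_comm] at hmem
    · rw [Set.mem_symmDiff] at hmem
      tauto
    · intro t ht
      rw [symmDiff_comm]
      exact hmin t ht

lemma SRel_trans (g : Y ↪ Set (Set Λ)) (i) :
    ∀ a b c : Y, SRel g i a b → SRel g i b c → SRel g i a c := by
  rintro a b c ⟨δ₁, hm1, hs1, hmin1⟩ ⟨δ₂, hm2, hs2, hmin2⟩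
  rcases trichotomous_of WellOrderingRel δ₁ δ₂ with h | h | h
  · refine ⟨δ₁, ?_, ?_, ?_⟩
    · have h12 : δ₁ ∉ (g b) ∆ (g c) := hmin2 _ h
      rw [Set.mem_symmDiff] at hm1 h12 ⊢
      tauto
    · have h12 : δ₁ ∉ (g b) ∆ (g c) := hmin2 _ h
      rw [Set.mem_symmDiff] at hm1 h12
      tauto
    · intro t ht
      have h1 := hmin1 t ht
      have h2 := hmin2 t (IsTrans.trans _ _ _ ht h)
      rw [Set.mem_symmDiff] at h1 h2 ⊢
      tauto
  · exfalso
    subst h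
    rw [Set.mem_symmDiff] at hm2
    tauto
  · refine ⟨δ₂, ?_, ?_, ?_⟩
    · have h21 : δ₂ ∉ (g a) ∆ (g b) := hmin1 _ h
      rw [Set.mem_symmDiff] at hm2 h21 ⊢
      tauto
    · exact hs2
    · intro t ht
      have h1 := hmin1 t (IsTrans.trans _ _ _ ht h)
      have h2 := hmin2 t ht
      rw [Set.mem_symmDiff] at h1 h2 ⊢
      tauto

noncomputable def lonY (g : Y ↪ Set (Set Λ)) (i : Finset Λ × Finset (Finset Λ)) :
    LinearOrder Y :=
  haveI h1 : IsTrichotomous Y (SRel g i) := ⟨fun a b h1 h2 => ((SRel_trichotomous g i a b).resolve_left h1).resolve_right h2⟩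
  haveI h2 : IsTrans Y (SRel g i) := ⟨SRel_trans g i⟩
  haveI h3 : IsIrrefl Y (SRel g i) := ⟨SRel_irrefl g i⟩
  haveI h4 : IsStrictTotalOrder Y (SRel g i) := {}
  @linearOrderOfSTO Y (SRel g i) h4 (Classical.decRel _)

lemma lonY_lt (g : Y ↪ Set (Set Λ)) (i) (a b : Y) :
    (lonY g i).lt a b ↔ SRel g i a b := Iff.rfl

/-- The key "finite top" property: any `b` can be put above any finite set `F` avoiding it,
by choosing a suitable twist index. -/
lemma finite_top (g : Y ↪ Set (Set Λ)) (b : Y) (F : Finset Y) (hbF : b ∉ F) :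
    ∃ i, ∀ a ∈ F, SRel g i a b := by
  classical
  have wf := (WellOrderingRel.isWellOrder (α := Set Λ)).toIsWellFounded.wf
  have hne : ∀ a ∈ F, ((g a) ∆ (g b)).Nonempty := fun a ha =>
    Set.symmDiff_nonempty.2 (fun hgg => hbF (by rwa [g.injective hgg] at ha))
  set df : Y → Set Λ := fun a =>
    if h : ((g a) ∆ (g b)).Nonempty then wf.min _ h else ∅ with hdf
  have hdmem : ∀ a ∈ F, df a ∈ (g a) ∆ (g b) := by
    intro a ha
    simp only [hdf, dif_pos (hne a ha)]
    exact wf.min_mem _ _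
  have hdmin : ∀ a ∈ F, ∀ t, WellOrderingRel t (df a) → t ∉ (g a) ∆ (g b) := by
    intro a ha t ht hts
    rw [hdf] at ht
    simp only [dif_pos (hne a ha)] at ht
    exact wf.not_lt_min _ hts ht
  obtain ⟨d, hd⟩ := exists_sep (F.image df)
  set E : Finset (Finset Λ) :=
    (F.filter (fun a => df a ∉ g b)).image (fun a => d.filter (fun x => x ∈ df a)) with hE
  refine ⟨(d, E), fun a ha => ⟨df a, hdmem a ha, ?_, hdmin a ha⟩⟩
  constructor
  · intro hgb hmask
    obtain ⟨e, heE, hagree⟩ := hmask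
    rw [hE] at heE
    obtain ⟨a', ha', he⟩ := Finset.mem_image.1 heE
    obtain ⟨ha'F, ha'gb⟩ := Finset.mem_filter.1 ha'
    have heq : df a' = df a := by
      refine hd _ (Finset.mem_image_of_mem df ha'F) _ (Finset.mem_image_of_mem df ha) ?_
      intro x hx
      have h1 := hagree x hx
      rw [← he] at h1
      rw [← h1]
      simp [Finset.mem_filter, hx]
    rw [heq] at ha'gb
    exact ha'gb hgb
  · intro hmask
    by_contra hgb
    refine hmask ⟨d.filter (fun x => x ∈ df a), ?_, ?_⟩
    · rw [hE]
      exact Finset.mem_image_of_mem _ (Finset.mem_filter.2 ⟨ha, hgb⟩)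
    · intro x hx
      simp [Finset.mem_filter, hx]

/-- The realizer for `Finset Y` built from colex orders. -/
lemma exists_realizer (g : Y ↪ Set (Set Λ)) :
    ∃ L : (Finset Λ × Finset (Finset Λ)) → Finset Y → Finset Y → Prop,
      IsRealizer (Finset Y) L := by
  classical
  refine ⟨fun i A B =>
    (letI := lonY g i; toColex A ≤ toColex B), ?_, ?_⟩
  · intro i
    letI := lonY g i
    refine { refl := fun A => le_refl (toColex A),
             trans := fun A B C h1 h2 => le_trans h1 h2,
             antisymm := fun A B h1 h2 => ?_,
             total := fun A B => le_total (toColex A) (toColex B) }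
    have := le_antisymm h1 h2
    exact toColex_inj.1 this
  · intro x y
    constructor
    · intro hxy i
      letI := lonY g i
      exact Finset.Colex.toColex_le_toColex_of_subset (Finset.le_iff_subset.1 hxy)
    · intro hall
      rw [Finset.le_iff_subset]
      by_contra hxy
      obtain ⟨b, hbx, hby⟩ := Finset.not_subset.1 hxy
      set F := (x ∪ y).erase b with hF
      have hbF : b ∉ F := fun hh => (Finset.mem_erase.1 hh).1 rfl
      obtain ⟨i, hi⟩ := finite_top g b F hbF
      have hforall : ∀ a ∈ y, a ∉ x → SRel g i a b := by
        intro a hay _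
        refine hi a ?_
        rw [hF, Finset.mem_erase]
        exact ⟨fun hh => hby (hh ▸ hay), Finset.mem_union_right _ hay⟩
      letI := lonY g i
      have hlt : toColex y < toColex x :=
        Finset.Colex.toColex_lt_toColex_iff_exists_forall_lt.2
          ⟨b, hbx, hby, fun a hay hax => hforall a hay hax⟩
      exact absurd (hall i) hlt.not_ge

end Construction

/-- The order dimension of the finite subsets of an infinite cardinal κ,
ordered by inclusion, is exactly log₂(log₂ κ). -/
theorem stmt4 (κ : Cardinal.{u}) (hκ : ℵ₀ ≤ κ) :
    orderDim (Finset κ.out) = clog2 (clog2 κ) := by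
  classical
  have hclog1 : κ ≤ 2 ^ clog2 κ := le_two_pow_clog2 κ
  have hclog2 : clog2 κ ≤ 2 ^ clog2 (clog2 κ) := le_two_pow_clog2 (clog2 κ)
  have hκlam : κ ≤ 2 ^ ((2 : Cardinal.{u}) ^ clog2 (clog2 κ)) :=
    hclog1.trans (Cardinal.power_le_power_left (by norm_num) hclog2)
  have hal : ℵ₀ ≤ clog2 κ := aleph0_le_clog2 hκ
  have hal2 : ℵ₀ ≤ clog2 (clog2 κ) := aleph0_le_clog2 hal
  haveI : Infinite (clog2 (clog2 κ)).out := by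
    rw [Cardinal.infinite_iff, Cardinal.mk_out]
    exact hal2
  have hgex : Nonempty (κ.out ↪ Set (Set (clog2 (clog2 κ)).out)) := by
    rw [← Cardinal.le_def]
    rwa [Cardinal.mk_out, Cardinal.mk_set, Cardinal.mk_set, Cardinal.mk_out]
  obtain ⟨g⟩ := hgex
  obtain ⟨L, hL⟩ := exists_realizer g
  have hmkι : #(Finset (clog2 (clog2 κ)).out × Finset (Finset (clog2 (clog2 κ)).out))
      = clog2 (clog2 κ) := by
    rw [Cardinal.mk_prod, Cardinal.lift_id, Cardinal.lift_id,
      Cardinal.mk_finset_of_infinite, Cardinal.mk_finset_of_infinite,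
      Cardinal.mk_finset_of_infinite, Cardinal.mk_out]
    exact Cardinal.mul_eq_self hal2
  have hmem : clog2 (clog2 κ) ∈
      { c | ∃ (ι : Type u) (L : ι → Finset κ.out → Finset κ.out → Prop),
        Cardinal.mk ι = c ∧ IsRealizer (Finset κ.out) L } :=
    ⟨_, L, hmkι, hL⟩
  apply le_antisymm
  · exact csInf_le (OrderBot.bddBelow _) hmem
  · refine le_csInf ⟨_, hmem⟩ (fun c hc => ?_)
    obtain ⟨ι, L', hι, hL'⟩ := hc
    have hX : κ ≤ 2 ^ ((2 : Cardinal.{u}) ^ c) := by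
      have hb := realizer_card_bound L' hL'
      rwa [hι, Cardinal.mk_out] at hb
    exact clog2_le (clog2_le hX)
end

section
/- For any infinite cardinal κ, the order dimension of the poset of finite subsets of κ ordered by inclusion is at least log₂(log₂(κ)); in fact already the poset of subsets of κ of size at most 2 has dimension at least log₂(log₂(κ)). -/
open Cardinal

universe u

/-- Every partial order has a realizer (Szpilrajn). -/
lemma realizer_exists (P : Type u) [PartialOrder P] :
    ∃ (ι : Type u) (L : ι → P → P → Prop), IsRealizer P L := by
  refine ⟨{r : P → P → Prop // IsLinearOrder P r ∧ ∀ x y : P, x ≤ y → r x y},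
    fun i => i.1, fun i => i.2.1, fun x y => ⟨fun h i => i.2.2 x y h, ?_⟩⟩
  intro h
  by_contra hxy
  have hne : x ≠ y := fun e => hxy (e ▸ le_refl x)
  set q : P → P → Prop := fun a b => a ≤ b ∨ (a ≤ y ∧ x ≤ b) with hq
  have hpo : IsPartialOrder P q := by
    refine { refl := fun a => Or.inl le_rfl, trans := ?_, antisymm := ?_ }
    · rintro a b c (hab | ⟨hay, hxb⟩) (hbc | ⟨hby, hxc⟩)
      · exact Or.inl (hab.trans hbc)
      · exact Or.inr ⟨hab.trans hby, hxc⟩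
      · exact Or.inr ⟨hay, hxb.trans hbc⟩
      · exact absurd (hxb.trans hby) hxy
    · rintro a b (hab | ⟨hay, hxb⟩) (hba | ⟨hby, hxa⟩)
      · exact le_antisymm hab hba
      · exact absurd ((hxa.trans hab).trans hby) hxy
      · exact absurd ((hxb.trans hba).trans hay) hxy
      · exact absurd (hxb.trans hby) hxy
  obtain ⟨s, hs, hqs⟩ := extend_partialOrder q
  have hsyx : s y x := hqs _ _ (Or.inr ⟨le_rfl, le_rfl⟩)
  have hsxy : s x y := h ⟨s, hs, fun a b hab => hqs _ _ (Or.inl hab)⟩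
  exact hne (hs.toIsPartialOrder.toAntisymm.antisymm _ _ hsxy hsyx)

/-- The key combinatorial lemma: if `P` has a realizer indexed by `ι` and contains a
"singletons and pairs" configuration indexed by `α`, then `#α ≤ 2 ^ 2 ^ #ι`. -/
lemma card_le_of_realizer {P : Type u} [PartialOrder P] {ι : Type u}
    {L : ι → P → P → Prop} (hL : IsRealizer P L) {α : Type u}
    (f : α → P) (g : α → α → P)
    (hf : Function.Injective f)
    (hff : ∀ a b : α, a ≠ b → ¬ f a ≤ f b)
    (hg1 : ∀ a b : α, f a ≤ g a b)
    (hg2 : ∀ a b : α, f b ≤ g a b)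
    (hg3 : ∀ a b x : α, x ≠ a → x ≠ b → ¬ f x ≤ g a b) :
    Cardinal.mk α ≤ Cardinal.mk (Set (Set ι)) := by
  set c : α → α → Set ι := fun a b => {i | L i (f a) (f b)} with hc
  set A : α → Set (Set ι) := fun a => {T | ∃ y, y ≠ a ∧ c a y = T} with hA
  refine mk_le_of_injective (f := A) ?_
  intro a b hab
  by_contra hne
  have hne' : b ≠ a := Ne.symm hne
  haveI := fun i => hL.1 i
  have hTa : c a b ∈ A a := ⟨b, hne', rfl⟩
  rw [hab] at hTa
  obtain ⟨x, hxb, hcbx⟩ := hTa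
  -- x ≠ a
  have hxa : x ≠ a := by
    intro hx
    obtain ⟨i, hi⟩ : ∃ i, ¬ L i (f a) (f b) := by
      by_contra hall
      push_neg at hall
      exact hff a b hne ((hL.2 _ _).2 hall)
    have h4 : L i (f b) (f a) := ((hL.1 i).toTotal.total _ _).resolve_left hi
    have h5 : i ∈ c b x := by rw [hx]; exact h4
    rw [hcbx] at h5
    exact hi h5
  -- main contradiction using the pair g a x and the element b
  obtain ⟨i, hi⟩ : ∃ i, ¬ L i (f b) (g a x) := by
    by_contra hall
    push_neg at hall
    exact hg3 a x b hne' (Ne.symm hxb) ((hL.2 _ _).2 hall)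
  have hi' : L i (g a x) (f b) := ((hL.1 i).toTotal.total _ _).resolve_left hi
  have h1 : L i (f a) (f b) :=
    (hL.1 i).toIsPartialOrder.toIsPreorder.toIsTrans.trans _ _ _ ((hL.2 _ _).1 (hg1 a x) i) hi'
  have h1' : i ∈ c a b := h1
  have h2' : L i (f b) (f x) := by
    have : i ∈ c b x := by rw [hcbx]; exact h1'
    exact this
  have h3 : L i (f x) (f b) :=
    (hL.1 i).toIsPartialOrder.toIsPreorder.toIsTrans.trans _ _ _ ((hL.2 _ _).1 (hg2 a x) i) hi'
  have : f x = f b := (hL.1 i).toIsPartialOrder.toAntisymm.antisymm _ _ h3 h2'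
  exact hxb (hf this)

lemma dim_ge {κ : Cardinal.{u}} {P : Type u} [PartialOrder P]
    (f : κ.out → P) (g : κ.out → κ.out → P)
    (hf : Function.Injective f)
    (hff : ∀ a b, a ≠ b → ¬ f a ≤ f b)
    (hg1 : ∀ a b, f a ≤ g a b)
    (hg2 : ∀ a b, f b ≤ g a b)
    (hg3 : ∀ a b x, x ≠ a → x ≠ b → ¬ f x ≤ g a b) :
    clog2 (clog2 κ) ≤ orderDim P := by
  refine le_csInf ?_ ?_
  · obtain ⟨ι, L, hL⟩ := realizer_exists P
    exact ⟨Cardinal.mk ι, ι, L, rfl, hL⟩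
  · rintro b ⟨ι, L, rfl, hL⟩
    have h1 : κ ≤ 2 ^ ((2 : Cardinal.{u}) ^ Cardinal.mk ι) := by
      have := card_le_of_realizer hL f g hf hff hg1 hg2 hg3
      rwa [mk_out, mk_set, mk_set] at this
    have h2 : clog2 κ ≤ (2 : Cardinal.{u}) ^ Cardinal.mk ι := csInf_le' h1
    exact csInf_le' h2

/-- Lower bound: the dimension of the finite subsets of κ is at least
log₂(log₂ κ); indeed, already the subsets of size at most 2 have dimension
at least log₂(log₂ κ). -/
theorem stmt5 (κ : Cardinal.{u}) (hκ : ℵ₀ ≤ κ) :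
    clog2 (clog2 κ) ≤ orderDim (Finset κ.out) ∧
    clog2 (clog2 κ) ≤ orderDim {s : Finset κ.out // s.card ≤ 2} := by
  classical
  constructor
  · refine dim_ge (fun a => {a}) (fun a b => {a, b}) ?_ ?_ ?_ ?_ ?_
    · exact fun a b h => by simpa using h
    · intro a b hab h
      simp only [Finset.le_iff_subset, Finset.singleton_subset_iff, Finset.mem_singleton] at h
      exact hab h
    · intro a b; simp [Finset.le_iff_subset]
    · intro a b; simp [Finset.le_iff_subset]
    · intro a b x hxa hxb h
      simp only [Finset.le_iff_subset, Finset.singleton_subset_iff, Finset.mem_insert,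
        Finset.mem_singleton] at h
      rcases h with h | h
      · exact hxa h
      · exact hxb h
  · refine dim_ge (fun a => ⟨{a}, by simp⟩) (fun a b => ⟨{a, b}, Finset.card_insert_le _ _ |>.trans (by simp)⟩) ?_ ?_ ?_ ?_ ?_
    · intro a b h
      simpa using congrArg Subtype.val h
    · intro a b hab h
      rw [Subtype.mk_le_mk] at h
      simp only [Finset.le_iff_subset, Finset.singleton_subset_iff, Finset.mem_singleton] at h
      exact hab h
    · intro a b; rw [Subtype.mk_le_mk]; simp [Finset.le_iff_subset]
    · intro a b; rw [Subtype.mk_le_mk]; simp [Finset.le_iff_subset]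
    · intro a b x hxa hxb h
      rw [Subtype.mk_le_mk] at h
      simp only [Finset.le_iff_subset, Finset.singleton_subset_iff, Finset.mem_insert,
        Finset.mem_singleton] at h
      rcases h with h | h
      · exact hxa h
      · exact hxb h
end

section
/- For any infinite cardinal κ, the order dimension of the poset of finite subsets of κ ordered by inclusion is at most log₂(log₂(κ)). -/
open Cardinal

universe u

open Classical in
noncomputable def auxMem {Θ Λ : Type u} (e : Θ ↪ Set Λ)
    (i : Finset Λ × Finset (Finset Λ)) (j : Θ) : Prop :=
  i.1.filter (fun y => y ∈ e j) ∈ i.2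

theorem aux_indep {Θ Λ : Type u} (e : Θ ↪ Set Λ) (J : Finset Θ) (P : Θ → Prop) :
    ∃ i : Finset Λ × Finset (Finset Λ), ∀ j ∈ J, (auxMem e i j ↔ P j) := by
  classical
  set w : Θ × Θ → Finset Λ := fun q =>
    if h : ((e q.1 \ e q.2) ∪ (e q.2 \ e q.1) : Set Λ).Nonempty then {h.choose} else ∅ with hw
  set F : Finset Λ := (J ×ˢ J).sup w with hF
  refine ⟨⟨F, (J.filter (fun j => P j)).image (fun j => F.filter (fun y => y ∈ e j))⟩, ?_⟩
  intro j hj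
  unfold auxMem
  simp only [Finset.mem_image, Finset.mem_filter]
  constructor
  · rintro ⟨j', ⟨hj', hPj'⟩, hfe⟩
    have heq : e j' = e j := by
      by_contra hne
      have hD : ((e j \ e j') ∪ (e j' \ e j) : Set Λ).Nonempty := by
        rw [Set.nonempty_iff_ne_empty]
        intro hemp
        rw [Set.union_empty_iff, Set.diff_eq_empty, Set.diff_eq_empty] at hemp
        exact hne (le_antisymm hemp.2 hemp.1)
      set x : Λ := hD.choose with hx
      have hxD : x ∈ ((e j \ e j') ∪ (e j' \ e j) : Set Λ) := hD.choose_spec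
      have hwx : w (j, j') = {x} := by
        simp only [hw]
        rw [dif_pos hD]
      have hxF : x ∈ F := by
        have h1 : w (j, j') ⊆ F := Finset.le_sup (Finset.mem_product.mpr ⟨hj, hj'⟩)
        exact h1 (by rw [hwx]; exact Finset.mem_singleton_self x)
      have := congrArg (fun s => x ∈ s) hfe
      simp only [Finset.mem_filter, hxF, true_and, eq_iff_iff] at this
      rcases hxD with h | h
      · exact h.2 (this.mpr h.1)
      · exact h.2 (this.mp h.1)
    have : j' = j := e.injective heq
    rwa [this] at hPj'
  · intro hPj
    exact ⟨j, ⟨hj, hPj⟩, rfl⟩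



open Classical in
noncomputable def auxF {X Θ Λ : Type u} (c : X ↪ Set Θ) (e : Θ ↪ Set Λ)
    (i : Finset Λ × Finset (Finset Λ)) (x : X) : Lex (Θ → Bool) :=
  toLex fun j => decide ((j ∈ c x) ↔ auxMem e i j)

theorem auxF_injective {X Θ Λ : Type u} (c : X ↪ Set Θ) (e : Θ ↪ Set Λ)
    (i : Finset Λ × Finset (Finset Λ)) : Function.Injective (auxF c e i) := by
  intro x y hxy
  apply c.injective
  ext j
  have h := congrFun (congrArg ofLex hxy) j
  simp only [auxF, Pi.toLex_apply, Pi.ofLex_apply, ofLex_toLex, decide_eq_decide] at h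
  tauto

open Classical in
noncomputable def auxG {X Θ Λ : Type u} (c : X ↪ Set Θ) (e : Θ ↪ Set Λ)
    (i : Finset Λ × Finset (Finset Λ)) (A : Finset X) : Colex (Finset (Lex (Θ → Bool))) :=
  toColex (A.image (auxF c e i))

theorem aux_realizer {X Θ Λ : Type u} [LinearOrder Θ] [WellFoundedLT Θ] [Nonempty Θ]
    (c : X ↪ Set Θ) (e : Θ ↪ Set Λ) :
    IsRealizer (Finset X) (fun i A B => auxG c e i A ≤ auxG c e i B) := by
  classical
  have Ginj : ∀ i, Function.Injective (auxG c e i) := by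
    intro i A B hAB
    have : A.image (auxF c e i) = B.image (auxF c e i) := toColex_inj.mp hAB
    exact Finset.image_injective (auxF_injective c e i) this
  constructor
  · intro i
    exact
      { refl := fun A => le_refl _
        trans := fun A B C h1 h2 => le_trans h1 h2
        antisymm := fun A B h1 h2 => Ginj i (le_antisymm h1 h2)
        total := fun A B => le_total _ _ }
  · intro A B
    constructor
    · intro hAB i
      exact Finset.Colex.toColex_mono (Finset.image_subset_image hAB)
    · intro h a ha
      by_contra haB
      -- minimal difference function
      have hDne : ∀ x : X, x ≠ a → ({j : Θ | ¬ ((j ∈ c a) ↔ (j ∈ c x))} : Set Θ).Nonempty := by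
        intro x hx
        rw [Set.nonempty_iff_ne_empty]
        intro hemp
        refine hx (c.injective (Set.ext fun j => ?_)).symm
        have := Set.eq_empty_iff_forall_notMem.mp hemp j
        simp only [Set.mem_setOf_eq, not_not] at this
        exact this
      set m : X → Θ := fun x =>
        if hx : ({j : Θ | ¬ ((j ∈ c a) ↔ (j ∈ c x))} : Set Θ).Nonempty then
          (wellFounded_lt (α := Θ)).min _ hx
        else Classical.arbitrary Θ with hm
      have hm_mem : ∀ x : X, x ≠ a → ¬ ((m x ∈ c a) ↔ (m x ∈ c x)) := by
        intro x hx
        have := (wellFounded_lt (α := Θ)).min_mem _ (hDne x hx)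
        simpa [hm, dif_pos (hDne x hx)] using this
      have hm_min : ∀ x : X, x ≠ a → ∀ j : Θ, j < m x → ((j ∈ c a) ↔ (j ∈ c x)) := by
        intro x hx j hj
        by_contra hcon
        have : ¬ j < m x := by
          simpa [hm, dif_pos (hDne x hx)] using
            (wellFounded_lt (α := Θ)).not_lt_min {j : Θ | ¬ ((j ∈ c a) ↔ (j ∈ c x))} (show j ∈ _ from hcon)
        exact this hj
      obtain ⟨i, hi⟩ := aux_indep e (((A ∪ B).erase a).image m) (fun j => j ∈ c a)
      have key : ∀ x ∈ (A ∪ B).erase a, auxF c e i x < auxF c e i a := by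
        intro x hx
        obtain ⟨hxa, hxAB⟩ := Finset.mem_erase.mp hx
        have hiJ : auxMem e i (m x) ↔ m x ∈ c a := hi (m x) (Finset.mem_image_of_mem m hx)
        refine ⟨m x, fun j hj => ?_, ?_⟩
        · show (decide ((j ∈ c x) ↔ auxMem e i j)) = (decide ((j ∈ c a) ↔ auxMem e i j))
          rw [decide_eq_decide]
          have := hm_min x hxa j hj
          tauto
        · show (decide ((m x ∈ c x) ↔ auxMem e i (m x))) < (decide ((m x ∈ c a) ↔ auxMem e i (m x)))
          have h1 : decide ((m x ∈ c a) ↔ auxMem e i (m x)) = true := by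
            rw [decide_eq_true_eq]; tauto
          have h2 : decide ((m x ∈ c x) ↔ auxMem e i (m x)) = false := by
            rw [decide_eq_false_iff_not]
            have := hm_mem x hxa
            tauto
          rw [h1, h2]
          exact Bool.false_lt_true
      have h1 : auxF c e i a ∈ A.image (auxF c e i) := Finset.mem_image_of_mem _ ha
      have h2 : auxF c e i a ∉ B.image (auxF c e i) := by
        intro hmem
        obtain ⟨b, hb, heq⟩ := Finset.mem_image.mp hmem
        exact haB (auxF_injective c e i heq ▸ hb)
      obtain ⟨b, hbB, hbA, hab⟩ := Finset.Colex.toColex_le_toColex.mp (h i) h1 h2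
      obtain ⟨x', hx', rfl⟩ := Finset.mem_image.mp hbB
      have hx'a : x' ≠ a := by
        rintro rfl
        exact hbA h1
      have hlt := key x' (Finset.mem_erase.mpr ⟨hx'a, Finset.mem_union_right _ hx'⟩)
      exact absurd hab hlt.not_ge

/-- Upper bound: the dimension of the finite subsets of κ under inclusion is
at most log₂(log₂ κ). -/
theorem stmt6 (κ : Cardinal.{u}) (hκ : ℵ₀ ≤ κ) :
    orderDim (Finset κ.out) ≤ clog2 (clog2 κ) := by
  classical
  have h1 : κ ≤ 2 ^ clog2 κ := csInf_mem (s := {l : Cardinal.{u} | κ ≤ 2 ^ l}) ⟨κ, (cantor κ).le⟩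
  have h2 : clog2 κ ≤ 2 ^ clog2 (clog2 κ) := csInf_mem (s := {l : Cardinal.{u} | clog2 κ ≤ 2 ^ l}) ⟨clog2 κ, (cantor _).le⟩
  have hθinf : ℵ₀ ≤ clog2 κ := by
    by_contra hc
    push_neg at hc
    exact absurd (hκ.trans h1)
      (power_lt_aleph0 (nat_lt_aleph0 2) hc).not_ge
  have hlinf : ℵ₀ ≤ clog2 (clog2 κ) := by
    by_contra hc
    push_neg at hc
    exact absurd (hθinf.trans h2)
      (power_lt_aleph0 (nat_lt_aleph0 2) hc).not_ge
  haveI : Nonempty (clog2 κ).ord.ToType := by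
    rw [← mk_ne_zero_iff, mk_ord_toType]
    exact (aleph0_pos.trans_le hθinf).ne'
  haveI : Infinite (clog2 (clog2 κ)).out := by
    rw [infinite_iff, mk_out]; exact hlinf
  obtain ⟨c⟩ : Nonempty (κ.out ↪ Set (clog2 κ).ord.ToType) := by
    rw [← le_def, mk_out, mk_set, mk_ord_toType]
    exact h1
  obtain ⟨e⟩ : Nonempty ((clog2 κ).ord.ToType ↪ Set (clog2 (clog2 κ)).out) := by
    rw [← le_def, mk_ord_toType, mk_set, mk_out]
    exact h2
  have hreal := aux_realizer c e
  apply csInf_le'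
  refine ⟨Finset (clog2 (clog2 κ)).out × Finset (Finset (clog2 (clog2 κ)).out),
    fun i A B => auxG c e i A ≤ auxG c e i B, ?_, hreal⟩
  rw [mk_prod, lift_id, lift_id, mk_finset_of_infinite, mk_finset_of_infinite, mk_finset_of_infinite,
    mk_out]
  exact mul_eq_self hlinf
end

section
/- If (P, ≤) is a locally countable partial order, then there exists a function r : P → η · ω₁ (the antilexicographic product of the order type η of the rationals with ω₁) such that x < y implies r(x) < r(y). -/
open Cardinal

universe u

/-- Every locally countable partial order admits a rank function into
η · ω₁, i.e. into ℚ × ω₁ ordered antilexicographically, which is strictly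
increasing. -/
theorem stmt8 {P : Type u} [PartialOrder P]
    (hloc : ∀ x : P, {y : P | y ≤ x}.Countable) :
    ∃ r : P → ℚ × {o : Ordinal.{u} // o < (Cardinal.aleph 1).ord},
      ∀ x y : P, x < y →
        ((r x).2 < (r y).2 ∨ ((r x).2 = (r y).2 ∧ (r x).1 < (r y).1)) := by
  classical
  -- a well-order on `P`
  set wo : P → P → Prop := WellOrderingRel with hwo
  have iwo : IsWellOrder P wo := WellOrderingRel.isWellOrder
  have wf : WellFounded wo := iwo.wf
  -- the block of `x` : the `wo`-least `z` with `x ≤ z`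
  let blk : P → P := fun x => wf.min {z | x ≤ z} ⟨x, le_refl x⟩
  have hble : ∀ x, x ≤ blk x := fun x => wf.min_mem {z | x ≤ z} ⟨x, le_refl x⟩
  have hblk_min : ∀ x z, x ≤ z → ¬ wo z (blk x) := fun x z hz =>
    wf.not_lt_min {z | x ≤ z} hz
  have hblk_le : ∀ {x y : P}, x ≤ y → blk x = blk y ∨ wo (blk x) (blk y) := by
    intro x y h
    have h1 : ¬ wo (blk y) (blk x) := hblk_min x (blk y) (h.trans (hble y))
    rcases trichotomous_of wo (blk x) (blk y) with h2 | h2 | h2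
    · exact Or.inr h2
    · exact Or.inl h2
    · exact absurd h2 h1
  -- the set of earlier blocks a given block depends on
  let pr : P → Set P := fun z' => {z | wo z z' ∧ ∃ x : P, x ≤ z' ∧ blk x = z}
  have hprc : ∀ z', (pr z').Countable := by
    intro z'
    have hsub : pr z' ⊆ blk '' {y | y ≤ z'} := by
      rintro z ⟨-, x, hx, rfl⟩
      exact ⟨x, hx, rfl⟩
    exact (((hloc z').image blk).mono hsub)
  -- the ordinal rank of a block, by well-founded recursion
  let F : P → Ordinal.{u} :=
    wf.fix (fun z' IH => ⨆ z : pr z', IH z.1 z.2.1 + 1)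
  have hF : ∀ z', F z' = ⨆ z : pr z', F z.1 + 1 := by
    intro z'
    exact wf.fix_eq _ z'
  -- the rank is always below ω₁
  have hFlt : ∀ z', F z' < (Cardinal.aleph 1).ord := by
    intro z'
    induction z' using WellFounded.induction wf with
    | _ z' IH =>
      rw [hF]
      haveI : Countable (pr z') := (hprc z').to_subtype
      refine Ordinal.iSup_lt_ord ?_ ?_
      · rw [Cardinal.isRegular_aleph_one.cof_eq]
        exact lt_of_le_of_lt Cardinal.mk_le_aleph0 Cardinal.aleph0_lt_aleph_one
      · rintro ⟨z, hz⟩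
        have h := IH z hz.1
        show F z + 1 < (Cardinal.aleph 1).ord
        rw [Ordinal.add_one_eq_succ]
        exact (Cardinal.isSuccLimit_ord (Cardinal.aleph0_le_aleph 1)).succ_lt h
  -- strict increase of rank across distinct blocks
  have hFstrict : ∀ {x y : P}, x ≤ y → wo (blk x) (blk y) → F (blk x) < F (blk y) := by
    intro x y hxy hlt
    have hzin : blk x ∈ pr (blk y) := ⟨hlt, x, hxy.trans (hble y), rfl⟩
    have h1 : F (blk x) + 1 ≤ F (blk y) := by
      rw [hF (blk y)]
      exact Ordinal.le_iSup (fun z : pr (blk y) => F z.1 + 1) ⟨blk x, hzin⟩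
    have h0 : F (blk x) < F (blk x) + 1 := by
      rw [Ordinal.add_one_eq_succ]
      exact Order.lt_succ _
    exact lt_of_lt_of_le h0 h1
  -- a strictly monotone rational labelling inside each block
  have hq : ∀ z : P, ∃ f : P → ℚ,
      ∀ a b : P, a ≤ z → b ≤ z → a < b → f a < f b := by
    intro z
    haveI : Countable {x : P // x ≤ z} := (hloc z).to_subtype
    haveI : Countable (LinearExtension {x : P // x ≤ z}) :=
      inferInstanceAs (Countable {x : P // x ≤ z})
    obtain ⟨g⟩ :=
      Order.embedding_from_countable_to_dense
        (α := LinearExtension {x : P // x ≤ z}) (β := ℚ)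
    refine ⟨fun a => if h : a ≤ z then g (toLinearExtension ⟨a, h⟩) else 0, ?_⟩
    intro a b ha hb hab
    simp only [dif_pos ha, dif_pos hb]
    apply g.strictMono
    have hmon : toLinearExtension (⟨a, ha⟩ : {x : P // x ≤ z}) ≤
        toLinearExtension ⟨b, hb⟩ :=
      toLinearExtension.monotone (Subtype.mk_le_mk.mpr hab.le)
    refine lt_of_le_of_ne hmon fun h => ?_
    have : (⟨a, ha⟩ : {x : P // x ≤ z}) = ⟨b, hb⟩ := h
    exact hab.ne (congrArg Subtype.val this)
  choose q hqmono using hq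
  refine ⟨fun x => (q (blk x) x, ⟨F (blk x), hFlt _⟩), fun x y hxy => ?_⟩
  dsimp only
  rcases hblk_le hxy.le with heq | hlt
  · right
    refine ⟨Subtype.ext ?_, ?_⟩
    · show F (blk x) = F (blk y)
      rw [heq]
    · show q (blk x) x < q (blk y) y
      rw [heq]
      exact hqmono (blk y) x y (heq ▸ hble x) (hble y) hxy
  · left
    exact Subtype.mk_lt_mk.mpr (hFstrict hxy.le hlt)
end

section
/- Let κ be a regular uncountable cardinal and (P, ≤) a locally countable partial order of size κ⁺. Then there is a family (f_α : α < κ) of functions f_α : P → 2 such that for every countable A ⊆ P and every y ∈ P \ A, there is α < κ with f_α(x) = 0 for all x ∈ A and f_α(y) = 1. -/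
open Cardinal

universe u

open Ordinal in
/-- Diagonal lemma: given κ-many functions on `κ.ord.ToType`, there is a function
almost disjoint from all of them. -/
private lemma stmt9_diag {κ : Cardinal.{u}} (hreg : κ.IsRegular)
    (g : κ.ord.ToType → κ.ord.ToType → κ.ord.ToType) :
    ∃ f : κ.ord.ToType → κ.ord.ToType,
      ∀ i, #{ξ : κ.ord.ToType | f ξ = g i ξ} < κ := by
  classical
  have hIio : ∀ i : κ.ord.ToType, #(Set.Iio i) < κ :=
    fun i => Cardinal.mk_Iio_ord_toType i
  have hb : ∀ ξ : κ.ord.ToType, ∃ b, ∀ i ≤ ξ, g i ξ < b := by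
    intro ξ
    have hS : #((fun i => g i ξ) '' Set.Iic ξ) < κ := by
      refine lt_of_le_of_lt mk_image_le ?_
      have : (Set.Iic ξ) = insert ξ (Set.Iio ξ) := by
        ext z; simp [le_iff_lt_or_eq, or_comm]
      rw [this]
      refine lt_of_le_of_lt mk_insert_le ?_
      exact Cardinal.add_lt_of_lt hreg.aleph0_le (hIio ξ) (lt_of_lt_of_le one_lt_aleph0 hreg.aleph0_le)
    have hbd : Set.Bounded (· < ·) ((fun i => g i ξ) '' Set.Iic ξ) := by
      haveI : IsWellOrder κ.ord.ToType (· < ·) := isWellOrder_lt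
      exact not_isCofinal_iff.1 fun hc => (Order.cof_le hc).not_gt (by rwa [Ordinal.cof_toType, hreg.cof_eq])
    obtain ⟨b, hb⟩ := hbd
    exact ⟨b, fun i hi => hb _ ⟨i, hi, rfl⟩⟩
  choose f hf using hb
  refine ⟨f, fun i => ?_⟩
  have hsub : {ξ : κ.ord.ToType | f ξ = g i ξ} ⊆ Set.Iio i := by
    intro ξ hξ
    by_contra h
    have hle : i ≤ ξ := not_lt.mp h
    exact absurd hξ (ne_of_gt (hf ξ i hle))
  exact lt_of_le_of_lt (mk_le_mk_of_subset hsub) (hIio i)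

/-- There is a family of more than κ pairwise almost disjoint functions on
`κ.ord.ToType`. -/
private lemma stmt9_bigAD {κ : Cardinal.{u}} (hreg : κ.IsRegular) :
    ∃ F : Set (κ.ord.ToType → κ.ord.ToType),
      (F.Pairwise fun f g => #{ξ : κ.ord.ToType | f ξ = g ξ} < κ) ∧ κ < #F := by
  classical
  set K := κ.ord.ToType with hK
  have hmkK : #K = κ := by rw [hK, Cardinal.mk_toType, card_ord]
  have hinf : Infinite K := by
    rw [Cardinal.infinite_iff, hmkK]; exact hreg.aleph0_le
  have hne : Nonempty K := inferInstance
  obtain ⟨M, hM⟩ := zorn_subset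
    {F : Set (K → K) | F.Pairwise fun f g => #{ξ : K | f ξ = g ξ} < κ}
    (by
      intro c hc hchain
      refine ⟨⋃₀ c, ?_, fun s hs => Set.subset_sUnion_of_mem hs⟩
      intro a ha b hb hab
      obtain ⟨s, hs, has⟩ := ha
      obtain ⟨t, ht, hbt⟩ := hb
      rcases hchain.total hs ht with h | h
      · exact hc ht (h has) hbt hab
      · exact hc hs has (h hbt) hab)
  have hMP : M.Pairwise fun f g => #{ξ : K | f ξ = g ξ} < κ := hM.1
  refine ⟨M, hMP, ?_⟩
  by_contra hle
  push_neg at hle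
  -- #M ≤ κ = #K, enumerate M by K
  have hMK : #M ≤ #K := by rwa [hmkK]
  obtain ⟨emb⟩ := (Cardinal.le_def _ _).mp hMK
  set g : K → (K → K) := fun k =>
    if h : ∃ m : M, emb m = k then (h.choose : K → K) else id with hgdef
  have hrange : ∀ m : K → K, m ∈ M → ∃ i, g i = m := by
    intro m hm
    refine ⟨emb ⟨m, hm⟩, ?_⟩
    have h : ∃ m' : M, emb m' = emb ⟨m, hm⟩ := ⟨⟨m, hm⟩, rfl⟩
    rw [hgdef]
    simp only [dif_pos h]
    have := h.choose_spec
    have : h.choose = ⟨m, hm⟩ := emb.injective this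
    rw [this]
  obtain ⟨f, hf⟩ := stmt9_diag hreg g
  have hfM : ∀ m ∈ M, #{ξ : K | f ξ = m ξ} < κ := by
    intro m hm
    obtain ⟨i, hi⟩ := hrange m hm
    rw [← hi]
    exact hf i
  have hfnot : f ∉ M := by
    intro hfm
    have := hfM f hfm
    have huniv : {ξ : K | f ξ = f ξ} = Set.univ := by ext ξ; simp
    rw [huniv, Cardinal.mk_univ, hmkK] at this
    exact absurd this (lt_irrefl κ)
  have hins : (insert f M) ∈
      {F : Set (K → K) | F.Pairwise fun f g => #{ξ : K | f ξ = g ξ} < κ} := by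
    intro a ha b hb hab
    rcases ha with rfl | ha
    · rcases hb with rfl | hb
      · exact absurd rfl hab
      · exact hfM b hb
    · rcases hb with rfl | hb
      · have := hfM a ha
        have hswap : {ξ : K | a ξ = b ξ} = {ξ : K | b ξ = a ξ} := by
          ext ξ; exact eq_comm
        rw [hswap]
        exact this
      · exact hMP ha hb hab
  have := hM.2 hins (Set.subset_insert f M)
  exact hfnot (this (Set.mem_insert f M))

/-- Let κ be regular uncountable and P a locally countable partial order of
size κ⁺. Then there are κ many two-valued functions on P separating each
point from each countable set. -/
theorem stmt9 (κ : Cardinal.{u}) (hreg : κ.IsRegular) (hunc : ℵ₀ < κ)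
    {P : Type u} [PartialOrder P] (hP : #P = Order.succ κ)
    (hloc : ∀ x : P, {y : P | y ≤ x}.Countable) :
    ∃ f : κ.out → P → Bool,
      ∀ A : Set P, A.Countable → ∀ y : P, y ∉ A →
        ∃ α : κ.out, (∀ x ∈ A, f α x = false) ∧ f α y = true := by
  classical
  set K := κ.ord.ToType with hK
  have hmkK : #K = κ := by rw [hK, Cardinal.mk_toType, card_ord]
  obtain ⟨F, hF, hcard⟩ := stmt9_bigAD hreg
  have hsucc : #P ≤ #F := by rw [hP]; exact Order.succ_le_of_lt hcard
  obtain ⟨emb⟩ := (Cardinal.le_def _ _).mp hsucc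
  set ι : P → (K → K) := fun x => (emb x : K → K) with hι
  have hιinj : Function.Injective ι := by
    intro a b hab
    exact emb.injective (Subtype.ext hab)
  have had : ∀ x y : P, x ≠ y → #{ξ : K | ι x ξ = ι y ξ} < κ := by
    intro x y hxy
    exact hF (emb x).2 (emb y).2 (fun h => hxy (hιinj h))
  -- index equiv
  have hKK : #(K × K) = κ := by
    have h := Cardinal.mk_prod K K
    simp only [Cardinal.lift_id] at h
    rw [h, hmkK, Cardinal.mul_eq_self hreg.aleph0_le]
  have hmk2 : #(κ.out) = #(K × K) := by rw [Cardinal.mk_out, hKK]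
  obtain ⟨E⟩ := Cardinal.eq.mp hmk2
  refine ⟨fun i x => if ι x (E i).1 = (E i).2 then true else false, ?_⟩
  intro A hA y hy
  set U : Set K := ⋃ a ∈ A, {ξ : K | ι a ξ = ι y ξ} with hU
  have hUlt : #U < κ := by
    rw [hU, Set.biUnion_eq_iUnion]
    refine lt_of_le_of_lt Cardinal.mk_iUnion_le_sum_mk ?_
    refine Cardinal.sum_lt_of_isRegular hreg ?_ ?_
    · have : #A ≤ ℵ₀ := by
        rw [Cardinal.mk_le_aleph0_iff]
        exact hA.to_subtype
      exact lt_of_le_of_lt this hunc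
    · rintro ⟨a, ha⟩
      exact had a y (fun h => hy (h ▸ ha))
  obtain ⟨ξ, hξ⟩ : ∃ ξ : K, ξ ∉ U := by
    by_contra h
    push_neg at h
    have : #(Set.univ : Set K) ≤ #U := mk_le_mk_of_subset (fun z _ => h z)
    rw [Cardinal.mk_univ, hmkK] at this
    exact absurd (lt_of_le_of_lt this hUlt) (lt_irrefl κ)
  refine ⟨E.symm (ξ, ι y ξ), ?_, ?_⟩
  · intro x hx
    have hne : ι x (E (E.symm (ξ, ι y ξ))).1 ≠ (E (E.symm (ξ, ι y ξ))).2 := by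
      rw [Equiv.apply_symm_apply]
      intro h
      exact hξ (Set.mem_biUnion hx h)
    simp only [if_neg hne]
  · have heq : ι y (E (E.symm (ξ, ι y ξ))).1 = (E (E.symm (ξ, ι y ξ))).2 := by
      rw [Equiv.apply_symm_apply]
    simp only [if_pos heq]
end

section
/- Let κ be an uncountable regular cardinal. If there is a sequence (E_ξ : ξ < κ⁺) of subsets of κ such that for every countable B ⊆ κ⁺ and every ζ ∈ κ⁺ \ B there is a finite F ⊆ κ with E_ξ ∩ F ≠ E_ζ ∩ F for all ξ ∈ B, then there is a sequence (g_ξ : ξ < κ⁺) of functions g_ξ : κ → 2 such that for every countable B ⊆ κ⁺ and every ζ ∈ κ⁺ \ B, there exists α < κ with g_ξ(α) = 0 for all ξ ∈ B and g_ζ(α) = 1. -/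
open Cardinal

universe u

/-- From a family of κ⁺ subsets of κ separated on finite sets from countable
subfamilies, one obtains functions g_ξ : κ → 2 separating each index from each
countable set of indices. -/
theorem stmt10 (κ : Cardinal.{u}) (hreg : κ.IsRegular) (hunc : ℵ₀ < κ)
    (E : (Order.succ κ).out → Set κ.out)
    (hE : ∀ B : Set ((Order.succ κ).out), B.Countable →
      ∀ ζ ∉ B, ∃ F : Finset κ.out, ∀ ξ ∈ B, E ξ ∩ ↑F ≠ E ζ ∩ ↑F) :
    ∃ g : (Order.succ κ).out → κ.out → Bool,
      ∀ B : Set ((Order.succ κ).out), B.Countable →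
        ∀ ζ ∉ B, ∃ α : κ.out, (∀ ξ ∈ B, g ξ α = false) ∧ g ζ α = true := by
  classical
  have hinf : Infinite κ.out := by
    rw [Cardinal.infinite_iff, Cardinal.mk_out]
    exact hunc.le
  have hT : #(Finset κ.out × Finset κ.out) = #(κ.out) := by
    rw [Cardinal.mk_prod, Cardinal.mk_finset_of_infinite, Cardinal.lift_id,
      Cardinal.mul_eq_self]
    rw [Cardinal.mk_out]; exact hunc.le
  obtain ⟨e⟩ := Cardinal.eq.mp hT
  refine ⟨fun ξ α => if E ξ ∩ ↑(e.symm α).1 = ↑(e.symm α).2 then true else false,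
    fun B hB ζ hζ => ?_⟩
  obtain ⟨F, hF⟩ := hE B hB ζ hζ
  set A : Finset κ.out := F.filter (· ∈ E ζ) with hA
  have hAF : (↑A : Set κ.out) = E ζ ∩ ↑F := by
    ext x; simp [hA, and_comm]
  refine ⟨e (F, A), fun ξ hξ => ?_, ?_⟩
  · simp only [Equiv.symm_apply_apply]
    rw [if_neg]; rw [hAF]; exact hF ξ hξ
  · simp only [Equiv.symm_apply_apply]
    rw [if_pos]; rw [hAF]
end

section
/- Let (P, ≤) be a locally countable partial order and f : P → 2 a function. Define y <' x iff there exists u ≤ x with f(u) = 1 and f(z) = 0 for all z ≤ y. Then the transitive closure of (< ∪ <') is irreflexive, and hence there is a linearization ≤_f of ≤ such that whenever f(u) = 1 for some u ≤ x and f(z) = 0 for all z ≤ y, we have y <_f x. -/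
open Cardinal

universe u

/-- Given f : P → 2 on a locally countable partial order, define y <′ x iff
some u ≤ x has f u = 1 while f z = 0 for all z ≤ y. Then the transitive
closure of < ∪ <′ is irreflexive, and there is a linearization of ≤ such
that y <′ x implies y is strictly below x. -/
theorem stmt13 {P : Type u} [PartialOrder P]
    (hloc : ∀ x : P, {y : P | y ≤ x}.Countable) (f : P → Bool) :
    (∀ x : P, ¬ Relation.TransGen
        (fun y x : P => y < x ∨
          ((∃ u, u ≤ x ∧ f u = true) ∧ ∀ z, z ≤ y → f z = false)) x x) ∧
    ∃ s : P → P → Prop, IsLinearOrder P s ∧ (∀ a b : P, a ≤ b → s a b) ∧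
      ∀ x y : P, (∃ u, u ≤ x ∧ f u = true) → (∀ z, z ≤ y → f z = false) →
        s y x ∧ y ≠ x := by
  classical
  set r : P → P → Prop := fun y x : P => y < x ∨
      ((∃ u, u ≤ x ∧ f u = true) ∧ ∀ z, z ≤ y → f z = false) with hrdef
  have excl : ∀ x : P, (∃ u, u ≤ x ∧ f u = true) →
      (∀ z, z ≤ x → f z = false) → False := by
    rintro x ⟨u, hu, hfu⟩ hlow
    simpa [hlow u hu] using hfu
  have highStep : ∀ {a b : P}, r a b → (∃ u, u ≤ a ∧ f u = true) → a < b := by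
    rintro a b (h | ⟨_, hlow⟩) hH
    · exact h
    · exact (excl a hH hlow).elim
  have highTG : ∀ {x y : P}, Relation.TransGen r x y →
      (∃ u, u ≤ x ∧ f u = true) → x < y := by
    intro x y h
    induction h with
    | single h => exact fun hH => highStep h hH
    | @tail b c h₁ h₂ ih =>
      intro hH
      have hxb := ih hH
      obtain ⟨u, hu, hfu⟩ := hH
      exact hxb.trans (highStep h₂ ⟨u, hu.trans hxb.le, hfu⟩)
  have lowTG : ∀ {x y : P}, Relation.TransGen r x y →
      (∀ z, z ≤ x → f z = false) → x < y ∨ (∃ u, u ≤ y ∧ f u = true) := by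
    intro x y h
    induction h with
    | single h =>
      intro _
      rcases h with h | ⟨hH, _⟩
      · exact Or.inl h
      · exact Or.inr hH
    | @tail b c h₁ h₂ ih =>
      intro hL
      rcases ih hL with hlt | hH
      · rcases h₂ with h | ⟨hH, _⟩
        · exact Or.inl (hlt.trans h)
        · exact Or.inr hH
      · obtain ⟨u, hu, hfu⟩ := hH
        exact Or.inr ⟨u, hu.trans (highStep h₂ ⟨u, hu, hfu⟩).le, hfu⟩
  have irr : ∀ x : P, ¬ Relation.TransGen r x x := by
    intro x hx
    by_cases hH : ∃ u, u ≤ x ∧ f u = true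
    · exact lt_irrefl x (highTG hx hH)
    · have hL : ∀ z, z ≤ x → f z = false := by
        intro z hz
        by_contra h
        exact hH ⟨z, hz, by simpa using h⟩
      rcases lowTG hx hL with h | h
      · exact lt_irrefl x h
      · exact hH h
  refine ⟨irr, ?_⟩
  have hq : IsPartialOrder P (Relation.ReflTransGen r) :=
    { refl := fun a => Relation.ReflTransGen.refl
      trans := fun a b c hab hbc => hab.trans hbc
      antisymm := fun a b hab hba => by
        rcases (Relation.reflTransGen_iff_eq_or_transGen).1 hab with h | h
        · exact h.symm
        rcases (Relation.reflTransGen_iff_eq_or_transGen).1 hba with h' | h'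
        · exact h'.symm ▸ rfl
        · exact absurd (h.trans h') (irr a) }
  obtain ⟨s, hs, hsub⟩ := @extend_partialOrder P (Relation.ReflTransGen r) hq
  haveI := hs
  refine ⟨s, hs, ?_, ?_⟩
  · intro a b hab
    rcases hab.lt_or_eq with h | rfl
    · exact hsub _ _ (Relation.ReflTransGen.single (Or.inl h))
    · exact refl_of s a
  · intro x y hH hL
    refine ⟨hsub _ _ (Relation.ReflTransGen.single (Or.inr ⟨hH, hL⟩)), ?_⟩
    rintro rfl
    exact excl _ hH hL
end

section
/- Let κ be a regular uncountable cardinal. Then every locally countable partial order of cardinality κ⁺ has order dimension at most κ. -/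
open Cardinal

universe u

lemma exists_notMem_of_mk_lt {α : Type u} (s : Set α) (h : #s < #α) : ∃ a, a ∉ s := by
  by_contra hc
  push_neg at hc
  have hu : s = Set.univ := Set.eq_univ_iff_forall.mpr hc
  rw [hu, Cardinal.mk_univ] at h
  exact lt_irrefl _ h

/-- A family of `κ⁺` many pairwise "eventually different-ish" functions `κ → κ`:
any two agree on a set of size `< κ`. -/
lemma exists_ad (κ : Cardinal.{u}) (hreg : κ.IsRegular) :
    ∃ G : (Order.succ κ).ord.ToType → κ.ord.ToType → κ.ord.ToType,
      ∀ x y, x ≠ y → #{ξ : κ.ord.ToType | G x ξ = G y ξ} < κ := by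
  classical
  set K := κ.ord.ToType with hK
  set W := (Order.succ κ).ord.ToType with hW
  have hKcard : #K = κ := by rw [hK, mk_toType, card_ord]
  have hIioK : ∀ ξ : K, #(Set.Iio ξ) < κ := fun ξ => mk_Iio_ord_toType ξ
  have hIicK : ∀ ξ : K, #(Set.Iic ξ) < κ := by
    intro ξ
    have h1 : (Set.Iic ξ) = insert ξ (Set.Iio ξ) := Set.Iio_insert.symm
    rw [h1]
    calc #(insert ξ (Set.Iio ξ) : Set K) ≤ #(Set.Iio ξ) + 1 := Cardinal.mk_insert_le
      _ < κ := Cardinal.add_lt_of_lt hreg.aleph0_le (hIioK ξ)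
          (lt_of_lt_of_le Cardinal.one_lt_aleph0 hreg.aleph0_le)
  have hWsmall : ∀ x : W, #(Set.Iio x) ≤ #K := by
    intro x
    have h1 : #(Set.Iio x) < Order.succ κ := mk_Iio_ord_toType x
    rw [hKcard]
    exact Order.lt_succ_iff.mp h1
  have hJ : ∀ x : W, Nonempty (Set.Iio x ↪ K) := fun x => Cardinal.le_def _ _ |>.mp (hWsmall x)
  let J : ∀ x : W, Set.Iio x ↪ K := fun x => (hJ x).some
  -- the "used values" set is small
  have hbound : ∀ (x : W) (IH : ∀ y : W, y < x → K → K) (ξ : K),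
      #{k : K | ∃ y : Set.Iio x, J x y < ξ ∧ IH y.1 y.2 ξ = k} < #K := by
    intro x IH ξ
    have hEq : {k : K | ∃ y : Set.Iio x, J x y < ξ ∧ IH y.1 y.2 ξ = k} =
        Set.range (fun p : {y : Set.Iio x // J x y < ξ} => IH p.1.1 p.1.2 ξ) := by
      ext k
      constructor
      · rintro ⟨y, h1, h2⟩; exact ⟨⟨y, h1⟩, h2⟩
      · rintro ⟨⟨y, h1⟩, h2⟩; exact ⟨y, h1, h2⟩
    rw [hEq]
    have h2 : #{y : Set.Iio x // J x y < ξ} ≤ #(Set.Iio ξ) := by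
      refine Cardinal.mk_le_of_injective (f := fun p => (⟨J x p.1, p.2⟩ : Set.Iio ξ)) ?_
      intro p q hpq
      have := (J x).injective (Subtype.ext_iff.mp hpq)
      exact Subtype.ext this
    calc #(Set.range (fun p : {y : Set.Iio x // J x y < ξ} => IH p.1.1 p.1.2 ξ))
        ≤ #{y : Set.Iio x // J x y < ξ} := Cardinal.mk_range_le
      _ ≤ #(Set.Iio ξ) := h2
      _ < κ := hIioK ξ
      _ = #K := hKcard.symm
  let F : ∀ x : W, (∀ y : W, y < x → K → K) → K → K := fun x IH ξ =>
    Classical.choose (exists_notMem_of_mk_lt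
      {k : K | ∃ y : Set.Iio x, J x y < ξ ∧ IH y.1 y.2 ξ = k} (hbound x IH ξ))
  let G : W → K → K := WellFounded.fix wellFounded_lt F
  have hGeq : ∀ x : W, G x = F x (fun y _ => G y) := fun x =>
    WellFounded.fix_eq wellFounded_lt F x
  have hkey : ∀ (x : W) (y : Set.Iio x) (ξ : K), J x y < ξ → G x ξ ≠ G y.1 ξ := by
    intro x y ξ hξ
    have h1 : G x ξ = F x (fun y _ => G y) ξ := by rw [hGeq x]
    rw [h1]
    intro hEq
    exact Classical.choose_spec (exists_notMem_of_mk_lt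
        {k : K | ∃ y : Set.Iio x, J x y < ξ ∧ G y.1 ξ = k}
        (hbound x (fun y _ => G y) ξ)) ⟨y, hξ, hEq.symm⟩
  refine ⟨G, ?_⟩
  have main : ∀ x y : W, y < x → #{ξ : K | G x ξ = G y ξ} < κ := by
    intro x y hlt
    have hsub : {ξ : K | G x ξ = G y ξ} ⊆ Set.Iic (J x ⟨y, hlt⟩) := by
      intro ξ hmem
      by_contra hnot
      exact hkey x ⟨y, hlt⟩ ξ (not_le.mp hnot) hmem
    exact lt_of_le_of_lt (Cardinal.mk_le_mk_of_subset hsub) (hIicK _)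
  intro x y hxy
  rcases hxy.lt_or_gt with h | h
  · have hswap : {ξ : K | G x ξ = G y ξ} = {ξ : K | G y ξ = G x ξ} :=
      Set.ext fun ξ => eq_comm
    rw [hswap]
    exact main y x h
  · exact main x y h

/-- A separating family of size `κ` on a set of size `κ⁺`: every point can be
separated from every countable set not containing it. -/
lemma exists_sep_s14 {P : Type u} (κ : Cardinal.{u}) (hreg : κ.IsRegular) (hunc : ℵ₀ < κ)
    (hP : #P = Order.succ κ) :
    ∃ (ι : Type u) (S : ι → Set P), #ι = κ ∧
      ∀ (x : P) (B : Set P), B.Countable → x ∉ B → ∃ i, x ∈ S i ∧ ∀ b ∈ B, b ∉ S i := by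
  classical
  obtain ⟨G, hG⟩ := exists_ad κ hreg
  let K : Type u := κ.ord.ToType
  have hKcard : #K = κ := by rw [show #K = #(κ.ord.ToType) from rfl, mk_toType, card_ord]
  have hPW : #P = #((Order.succ κ).ord.ToType) := by rw [mk_toType, card_ord, hP]
  obtain ⟨e⟩ := Cardinal.eq.mp hPW
  refine ⟨K × K, fun i => {p : P | G (e p) i.1 = i.2}, ?_, ?_⟩
  · rw [Cardinal.mk_prod, Cardinal.lift_id, hKcard, Cardinal.mul_eq_self hreg.aleph0_le]
  · intro x B hB hxB
    set T := ⋃ b ∈ B, {ξ : K | G (e x) ξ = G (e b) ξ} with hT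
    have hBle : #B ≤ ℵ₀ := Cardinal.mk_le_aleph0_iff.mpr (Set.countable_coe_iff.mpr hB)
    have hTlt : #T < κ := by
      have h1 : #T ≤ #B * ⨆ b : B, #{ξ : K | G (e x) ξ = G (e b.1) ξ} := by
        rw [hT, Set.biUnion_eq_iUnion]
        exact Cardinal.mk_iUnion_le _
      have h2 : (⨆ b : B, #{ξ : K | G (e x) ξ = G (e b.1) ξ}) < κ := by
        refine Cardinal.iSup_lt_of_isRegular hreg (lt_of_le_of_lt hBle hunc) ?_
        intro b
        have hxb : x ≠ b.1 := fun h => hxB (h ▸ b.2)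
        exact hG _ _ fun h => hxb (e.injective h)
      exact lt_of_le_of_lt h1
        (Cardinal.mul_lt_of_lt hreg.aleph0_le (lt_of_le_of_lt hBle hunc) h2)
    obtain ⟨ξ, hξ⟩ := exists_notMem_of_mk_lt T (by rwa [hKcard])
    refine ⟨(ξ, G (e x) ξ), rfl, ?_⟩
    intro b hb hbS
    exact hξ (Set.mem_biUnion hb (show G (e x) ξ = G (e b) ξ from hbS.symm))

/-- A locally countable partial order of size κ⁺, for κ regular uncountable,
has order dimension at most κ. -/
theorem stmt14 (κ : Cardinal.{u}) (hreg : κ.IsRegular) (hunc : ℵ₀ < κ)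
    {P : Type u} [PartialOrder P] (hP : #P = Order.succ κ)
    (hloc : ∀ x : P, {y : P | y ≤ x}.Countable) :
    orderDim P ≤ κ := by
  classical
  obtain ⟨ι, S, hι, hsep⟩ := exists_sep_s14 κ hreg hunc hP
  obtain ⟨Λ, hΛ, hext⟩ := extend_partialOrder ((· ≤ ·) : P → P → Prop)
  haveI := hΛ
  let f : ι → P → ℕ := fun i z => if ∃ d ∈ S i, d ≤ z then 1 else 0
  have fmono : ∀ i, ∀ {x y : P}, x ≤ y → f i x ≤ f i y := by
    intro i x y hxy
    by_cases h : ∃ d ∈ S i, d ≤ x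
    · have h' : ∃ d ∈ S i, d ≤ y := by
        obtain ⟨d, hd1, hd2⟩ := h
        exact ⟨d, hd1, hd2.trans hxy⟩
      simp only [f, if_pos h, if_pos h']
      exact le_refl _
    · simp only [f, if_neg h]
      exact Nat.zero_le _
  let L : ι → P → P → Prop := fun i x y => f i x < f i y ∨ (f i x = f i y ∧ Λ x y)
  have hLlin : ∀ i, IsLinearOrder P (L i) := by
    intro i
    refine { refl := ?_, trans := ?_, antisymm := ?_, total := ?_ }
    · intro a
      exact Or.inr ⟨rfl, refl_of Λ a⟩
    · rintro a b c (hab | ⟨hab, hab'⟩) (hbc | ⟨hbc, hbc'⟩)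
      · exact Or.inl (lt_trans hab hbc)
      · exact Or.inl (hbc ▸ hab)
      · exact Or.inl (hab ▸ hbc)
      · exact Or.inr ⟨hab.trans hbc, trans_of Λ hab' hbc'⟩
    · rintro a b (hab | ⟨hab, hab'⟩) (hba | ⟨hba, hba'⟩)
      · exact absurd hba (lt_asymm hab)
      · exact absurd hba (ne_of_gt hab)
      · exact absurd hba (not_lt_of_ge (le_of_eq hab))
      · exact antisymm_of Λ hab' hba'
    · intro a b
      rcases lt_trichotomy (f i a) (f i b) with h | h | h
      · exact Or.inl (Or.inl h)
      · rcases total_of Λ a b with h' | h'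
        · exact Or.inl (Or.inr ⟨h, h'⟩)
        · exact Or.inr (Or.inr ⟨h.symm, h'⟩)
      · exact Or.inr (Or.inl h)
  have hreal : IsRealizer P L := by
    refine ⟨hLlin, ?_⟩
    intro x y
    constructor
    · intro hxy i
      rcases eq_or_lt_of_le (fmono i hxy) with h | h
      · exact Or.inr ⟨h, hext _ _ hxy⟩
      · exact Or.inl h
    · intro h
      by_contra hxy
      obtain ⟨i, hxS, hBS⟩ := hsep x {d | d ≤ y} (hloc y) hxy
      have h1 : f i x = 1 := if_pos ⟨x, hxS, le_refl x⟩
      have h0 : f i y = 0 := by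
        refine if_neg ?_
        rintro ⟨d, hdS, hdy⟩
        exact hBS d hdy hdS
      rcases h i with h' | ⟨h', _⟩
      · rw [h1, h0] at h'; omega
      · rw [h1, h0] at h'; omega
  exact csInf_le' ⟨ι, L, hι, hreal⟩
end

section
/- Let κ be a cardinal of uncountable cofinality. Then every locally countable partial order of cardinality κ⁺ has order dimension at most κ. -/
open Cardinal

universe u

section Aux

open Ordinal Set

/-- A set `S` of pairs with no "alternating configuration" (`¬ p.1 ≤ q.2` for all
pairs in `S`) can be simultaneously reversed by a linear extension. -/
lemma reverse_ext {P : Type u} [PartialOrder P] (S : Set (P × P))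
    (h2 : ∀ p ∈ S, ∀ q ∈ S, ¬ p.1 ≤ q.2) :
    ∃ L : P → P → Prop, IsLinearOrder P L ∧ (∀ x y : P, x ≤ y → L x y) ∧
      ∀ p ∈ S, ¬ L p.1 p.2 := by
  classical
  let r : P → P → Prop := fun a b => a < b ∨ (b, a) ∈ S
  let t : P → P → Prop := Relation.TransGen r
  have key : ∀ x y, t x y → (x < y ∨ ∃ p ∈ S, x ≤ p.2 ∧ p.1 ≤ y) := by
    intro x y h
    induction h with
    | @single b h =>
      rcases h with h | h
      · exact Or.inl h
      · exact Or.inr ⟨(b, x), h, le_rfl, le_rfl⟩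
    | @tail b z hxb hbz ih =>
      rcases hbz with hbz | hbz
      · rcases ih with h1 | ⟨p, hp, hp1, hp2⟩
        · exact Or.inl (h1.trans hbz)
        · exact Or.inr ⟨p, hp, hp1, hp2.trans hbz.le⟩
      · rcases ih with h1 | ⟨p, hp, hp1, hp2⟩
        · exact Or.inr ⟨(z, b), hbz, h1.le, le_rfl⟩
        · exact absurd hp2 (h2 p hp (z, b) hbz)
  have tirr : ∀ x, ¬ t x x := by
    intro x hx
    rcases key x x hx with h | ⟨p, hp, h1, h1'⟩
    · exact lt_irrefl _ h
    · exact h2 p hp p hp (h1'.trans h1)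
  have ttrans : ∀ a b c, t a b → t b c → t a c := fun a b c hab hbc => hab.trans hbc
  let r' : P → P → Prop := fun a b => a = b ∨ t a b
  haveI hpo : IsPartialOrder P r' :=
    { refl := fun a => Or.inl rfl
      trans := by
        intro a b c hab hbc
        rcases hab with rfl | hab
        · exact hbc
        rcases hbc with rfl | hbc
        · exact Or.inr hab
        · exact Or.inr (ttrans _ _ _ hab hbc)
      antisymm := by
        intro a b hab hba
        rcases hab with rfl | hab
        · rfl
        rcases hba with rfl | hba
        · rfl
        exact absurd (ttrans _ _ _ hab hba) (tirr a) }
  obtain ⟨L, hL, hsub⟩ := extend_partialOrder r'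
  have hext : ∀ x y : P, x ≤ y → L x y := by
    intro x y hxy
    rcases eq_or_lt_of_le hxy with h | h
    · exact hsub _ _ (Or.inl h)
    · exact hsub _ _ (Or.inr (Relation.TransGen.single (Or.inl h)))
  refine ⟨L, hL, hext, ?_⟩
  intro p hp hLp
  have h21 : L p.2 p.1 := hsub _ _ (Or.inr (Relation.TransGen.single (Or.inr hp)))
  haveI := hL
  have heq : p.1 = p.2 := antisymm hLp h21
  exact h2 p hp p hp (le_of_eq heq)

/-- Union of a small family of small sets is small (in terms of cofinality). -/
lemma small_iUnion' {Z : Type u} {c : Cardinal.{u}} (hc : ℵ₀ ≤ c) {ι : Type u}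
    (hι : #ι < c.ord.cof) {A : ι → Set Z} (hA : ∀ i, #(A i) < c) :
    #(⋃ i, A i) < c :=
  (mk_iUnion_le A).trans_lt
    (Cardinal.mul_lt_of_lt hc (hι.trans_le (Ordinal.cof_ord_le c)) (Ordinal.iSup_lt hι hA))

/-- Initial segments of the canonical type of cardinality `c` have size `< c`. -/
lemma mk_Iic_toType_lt {c : Cardinal.{u}} (hc : ℵ₀ ≤ c) (x : c.ord.ToType) :
    #(Set.Iic x) < c := by
  have h4 : #(Set.Iio x) < c := Cardinal.mk_Iio_ord_toType x
  have h5 : (Set.Iic x : Set c.ord.ToType) = insert x (Set.Iio x) := by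
    rw [Set.Iio_insert]
  rw [h5]
  exact mk_insert_le.trans_lt (Cardinal.add_lt_of_lt hc h4 (lt_of_lt_of_le one_lt_aleph0 hc))

lemma mk_Iio_toType_lt {c : Cardinal.{u}} (hc : ℵ₀ ≤ c) (x : c.ord.ToType) :
    #(Set.Iio x) < c :=
  Cardinal.mk_Iio_ord_toType x

/-- Key combinatorial lemma: a separating family of size `κ` on any set of size
at most `κ⁺`, when `cf(κ) > ω`. -/
lemma sep_family (κ : Cardinal.{u}) (hcf : ℵ₀ < κ.ord.cof) (X : Type u)
    (hX : #X ≤ Order.succ κ) :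
    ∃ (K : Type u), #K = κ ∧ ∃ I : X → Set K,
      ∀ (x : X) (C : Set X), C.Countable → x ∉ C →
        ∃ i ∈ I x, ∀ y ∈ C, i ∉ I y := by
  classical
  set θ := κ.ord.cof with hθdef
  have hθκ : θ ≤ κ := Ordinal.cof_ord_le κ
  have hκ : ℵ₀ < κ := hcf.trans_le hθκ
  have hκ0 : ℵ₀ ≤ κ := hκ.le
  have hθ0 : ℵ₀ ≤ θ := hcf.le
  haveI : IsWellOrder κ.ord.ToType (· < ·) := isWellOrder_lt
  haveI : IsWellOrder θ.ord.ToType (· < ·) := isWellOrder_lt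
  haveI : IsWellOrder (Order.succ κ).ord.ToType (· < ·) := isWellOrder_lt
  have hD : #(θ.ord.ToType) = θ := by rw [mk_toType, card_ord]
  have hKb : #(κ.ord.ToType) = κ := by rw [mk_toType, card_ord]
  -- filtration of Kb by θ-many pieces of size < κ
  obtain ⟨Sset, hUnb, hScard⟩ :=
    Order.exists_cof_eq κ.ord.ToType
  have hScard' : #Sset = θ := by
    rw [hScard, Ordinal.cof_toType]
  obtain ⟨f⟩ : Nonempty (θ.ord.ToType ≃ Sset) := by
    rw [← Cardinal.eq, hD, hScard']
  let s : θ.ord.ToType → Set κ.ord.ToType := fun δ => {k | ∃ δ' ≤ δ, k ≤ (f δ' : κ.ord.ToType)}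
  have hs1 : ∀ δ, #(s δ) < κ := by
    intro δ
    have hsub : s δ ⊆ ⋃ (δ' : Set.Iic δ), Set.Iic ((f δ'.1 : κ.ord.ToType)) := by
      rintro k ⟨δ', hδ', hk⟩
      exact Set.mem_iUnion.2 ⟨⟨δ', hδ'⟩, hk⟩
    refine (mk_le_mk_of_subset hsub).trans_lt (small_iUnion' hκ0 ?_ ?_)
    · exact mk_Iic_toType_lt hθ0 δ
    · intro δ'
      exact mk_Iic_toType_lt hκ0 _
  have hs2 : ∀ k : κ.ord.ToType, #{δ : θ.ord.ToType | k ∉ s δ} < θ := by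
    intro k
    obtain ⟨a, haS, hak⟩ := hUnb k
    have hka : k ≤ a := hak
    set δ₀ := f.symm ⟨a, haS⟩ with hδ₀
    have hsub : {δ : θ.ord.ToType | k ∉ s δ} ⊆ Set.Iio δ₀ := by
      intro δ hδ
      by_contra hnot
      have hle : δ₀ ≤ δ := not_lt.mp hnot
      refine hδ ⟨δ₀, hle, ?_⟩
      rw [hδ₀, f.apply_symm_apply]
      exact hka
    exact (mk_le_mk_of_subset hsub).trans_lt (mk_Iio_toType_lt hθ0 δ₀)
  -- diagonalization: escape any ≤ κ-indexed family of functions D → Kb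
  have hdiag : ∀ (ι : Type u), #ι ≤ κ → ∀ F : ι → θ.ord.ToType → κ.ord.ToType, ∃ g : θ.ord.ToType → κ.ord.ToType,
      ∀ i, #{δ : θ.ord.ToType | g δ = F i δ} < θ := by
    intro ι hι F
    obtain ⟨e⟩ : Nonempty (ι ↪ κ.ord.ToType) := by
      rw [← Cardinal.le_def, hKb]; exact hι
    have hex : ∀ δ : θ.ord.ToType, ∃ k : κ.ord.ToType, ∀ i : ι, e i ∈ s δ → k ≠ F i δ := by
      intro δ
      by_contra hcontra
      push_neg at hcontra
      have hsurj : #(κ.ord.ToType) ≤ #{i : ι | e i ∈ s δ} := by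
        refine mk_le_of_surjective (f := fun (p : {i : ι | e i ∈ s δ}) => F p.1 δ) ?_
        intro k
        obtain ⟨i, hi, hk⟩ := hcontra k
        exact ⟨⟨i, hi⟩, hk.symm⟩
      have hinj : #{i : ι | e i ∈ s δ} ≤ #(s δ) := by
        refine mk_le_of_injective (f := fun (p : {i : ι | e i ∈ s δ}) => (⟨e p.1, p.2⟩ : s δ)) ?_
        intro p q hpq
        exact Subtype.ext (e.injective (congrArg Subtype.val hpq))
      rw [hKb] at hsurj
      exact absurd (hsurj.trans hinj) (hs1 δ).not_ge
    choose g hg using hex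
    refine ⟨g, fun i => (mk_le_mk_of_subset ?_).trans_lt (hs2 (e i))⟩
    intro δ hδ hmem
    exact hg δ i hmem hδ
  -- transfinite recursion along a well-order of size κ⁺
  have hsucc0 : ℵ₀ ≤ Order.succ κ := hκ0.trans (le_of_lt (Order.lt_succ κ))
  have hWcard : #((Order.succ κ).ord.ToType) = Order.succ κ := by rw [mk_toType, card_ord]
  obtain ⟨emb⟩ : Nonempty (X ↪ (Order.succ κ).ord.ToType) := by
    rw [← Cardinal.le_def, hWcard]; exact hX
  have hsegW : ∀ w : (Order.succ κ).ord.ToType,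
      #{w' : (Order.succ κ).ord.ToType // w' < w} ≤ κ := by
    intro w
    have h1 : #(Set.Iio w) < Order.succ κ := mk_Iio_toType_lt hsucc0 w
    exact Order.lt_succ_iff.mp h1
  let Fix : (Order.succ κ).ord.ToType → θ.ord.ToType → κ.ord.ToType :=
    WellFounded.fix (wellFounded_lt)
      (fun w rec => Classical.choose (hdiag {w' : (Order.succ κ).ord.ToType // w' < w}
        (hsegW w) (fun p => rec p.1 p.2)))
  have hFixeq : ∀ w : (Order.succ κ).ord.ToType,
      Fix w = Classical.choose (hdiag {w' : (Order.succ κ).ord.ToType // w' < w} (hsegW w)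
        (fun p => Fix p.1)) := by
    intro w
    exact WellFounded.fix_eq _ _ w
  have hG : ∀ w w' : (Order.succ κ).ord.ToType, w' < w →
      #{δ : θ.ord.ToType | Fix w δ = Fix w' δ} < θ := by
    intro w w' hlt
    have hspec := Classical.choose_spec (hdiag {w'' : (Order.succ κ).ord.ToType // w'' < w}
      (hsegW w) (fun p => Fix p.1)) ⟨w', hlt⟩
    rwa [← hFixeq w] at hspec
  have hGne : ∀ w w' : (Order.succ κ).ord.ToType, w ≠ w' →
      #{δ : θ.ord.ToType | Fix w δ = Fix w' δ} < θ := by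
    intro w w' hne
    rcases lt_or_gt_of_ne hne with h | h
    · refine (mk_le_mk_of_subset ?_).trans_lt (hG w' w h)
      intro δ hδ
      exact hδ.symm
    · exact hG w w' h
  refine ⟨θ.ord.ToType × κ.ord.ToType, ?_,
    fun x => {p : θ.ord.ToType × κ.ord.ToType | p.2 = Fix (emb x) p.1}, ?_⟩
  · rw [mk_prod, Cardinal.lift_id, Cardinal.lift_id, hD, hKb]
    exact Cardinal.mul_eq_right hκ0 hθκ (aleph0_pos.trans_le hθ0).ne'
  · intro x C hC hxC
    by_contra hcon
    push_neg at hcon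
    have hcov : ∀ δ : θ.ord.ToType, ∃ y : C, Fix (emb x) δ = Fix (emb y.1) δ := by
      intro δ
      obtain ⟨y, hyC, hy⟩ := hcon (δ, Fix (emb x) δ) rfl
      exact ⟨⟨y, hyC⟩, hy⟩
    have hsubU : (Set.univ : Set θ.ord.ToType) ⊆
        ⋃ (y : C), {δ : θ.ord.ToType | Fix (emb x) δ = Fix (emb y.1) δ} := by
      intro δ _
      exact Set.mem_iUnion.2 (hcov δ)
    have hCcard : #C < θ.ord.cof := by
      have h1 : #C ≤ ℵ₀ := Cardinal.mk_le_aleph0_iff.mpr (Set.countable_coe_iff.mpr hC)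
      have hreg : θ ≤ θ.ord.cof := (Cardinal.isRegular_cof (isSuccLimit_ord hκ0)).2
      exact h1.trans_lt (hcf.trans_le hreg)
    have hlt : #(⋃ (y : C), {δ : θ.ord.ToType | Fix (emb x) δ = Fix (emb y.1) δ}) < θ := by
      refine small_iUnion' hθ0 hCcard ?_
      intro y
      refine hGne _ _ ?_
      intro heq
      exact hxC (by rw [emb.injective heq]; exact y.2)
    have hθle : θ ≤ #(⋃ (y : C), {δ : θ.ord.ToType | Fix (emb x) δ = Fix (emb y.1) δ}) := by
      calc θ = #(θ.ord.ToType) := hD.symm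
        _ = #(Set.univ : Set θ.ord.ToType) := by rw [mk_univ]
        _ ≤ _ := mk_le_mk_of_subset hsubU
    exact absurd (hθle.trans_lt hlt) (lt_irrefl θ)

end Aux

/-- A locally countable partial order of size κ⁺, for κ of uncountable
cofinality, has order dimension at most κ. -/
theorem stmt15 (κ : Cardinal.{u}) (hcf : ℵ₀ < κ.ord.cof)
    {P : Type u} [PartialOrder P] (hP : #P = Order.succ κ)
    (hloc : ∀ x : P, {y : P | y ≤ x}.Countable) :
    orderDim P ≤ κ := by
  classical
  obtain ⟨K, hK, I, hsep⟩ := sep_family κ hcf P (le_of_eq hP)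
  -- the classes of incomparable pairs to be reversed
  let S : K → Set (P × P) := fun i =>
    {p | (¬ p.1 ≤ p.2 ∧ ¬ p.2 ≤ p.1) ∧ i ∈ I p.1 ∧ ∀ z : P, z ≤ p.2 → i ∉ I z}
  have hcond : ∀ i : K, ∀ p ∈ S i, ∀ q ∈ S i, ¬ p.1 ≤ q.2 := by
    intro i p hp q hq hle
    exact hq.2.2 p.1 hle hp.2.1
  choose L hLlin hLext hLrev using fun i => reverse_ext (S i) (hcond i)
  have hreal : IsRealizer P L := by
    constructor
    · exact hLlin
    · intro x y
      constructor
      · intro hxy i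
        exact hLext i x y hxy
      · intro hall
        by_contra hxy
        by_cases hyx : y ≤ x
        · have hne : x ≠ y := fun h => hxy (le_of_eq h)
          obtain ⟨i⟩ : Nonempty K := by
            rw [← mk_ne_zero_iff, hK]
            exact fun h => (by simp [h] at hcf : False)
          haveI := hLlin i
          exact hne (antisymm (hall i) (hLext i y x hyx))
        · -- x and y are incomparable
          obtain ⟨i, hiI, hiC⟩ := hsep x {z : P | z ≤ y} (hloc y) hxy
          have hmem : (x, y) ∈ S i := ⟨⟨hxy, hyx⟩, hiI, fun z hz => hiC z hz⟩
          exact hLrev i (x, y) hmem (hall i)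
  have hκmem : κ ∈ { c | ∃ (ι : Type u) (L : ι → P → P → Prop), #ι = c ∧ IsRealizer P L } :=
    ⟨K, L, hK, hreal⟩
  exact csInf_le' hκmem
end

section
/- Let (P, ≤) be a partial order containing a strongly independent antichain S. Then the order dimension of (P, ≤) is at least |S|. -/
open Cardinal

universe u

section aux

variable {P : Type u} [PartialOrder P]

/-- A linear extension separating a pair `¬ x ≤ y`. -/
lemma exists_linear_ext_block {x y : P} (hxy : ¬ x ≤ y) :
    ∃ s : P → P → Prop, IsLinearOrder P s ∧ (∀ a b : P, a ≤ b → s a b) ∧ ¬ s x y := by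
  let r : P → P → Prop := fun a b => a ≤ b ∨ (a ≤ y ∧ x ≤ b)
  haveI : IsPartialOrder P r := by
    refine { refl := fun a => Or.inl le_rfl, trans := ?_, antisymm := ?_ }
    · rintro a b c (hab | ⟨hay, hxb⟩) (hbc | ⟨hby, hxc⟩)
      · exact Or.inl (hab.trans hbc)
      · exact Or.inr ⟨hab.trans hby, hxc⟩
      · exact Or.inr ⟨hay, hxb.trans hbc⟩
      · exact (hxy (hxb.trans hby)).elim
    · rintro a b (hab | ⟨hay, hxb⟩) (hba | ⟨hby, hxa⟩)
      · exact hab.antisymm hba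
      · exact (hxy (hxa.trans (hab.trans hby))).elim
      · exact (hxy (hxb.trans (hba.trans hay))).elim
      · exact (hxy (hxb.trans hby)).elim
  obtain ⟨s, hs, hrs⟩ := extend_partialOrder r
  refine ⟨s, hs, fun a b hab => hrs _ _ (Or.inl hab), fun hsxy => ?_⟩
  have hsyx : s y x := hrs _ _ (Or.inr ⟨le_rfl, le_rfl⟩)
  exact hxy ((hs.antisymm _ _ hsxy hsyx) ▸ le_rfl)

/-- A realizer always exists (indexed by `P × P`). -/
lemma exists_realizer_s16 :
    ∃ L : P × P → P → P → Prop, IsRealizer P L := by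
  haveI : IsPartialOrder P (· ≤ ·) := inferInstance
  obtain ⟨s₀, hs₀, hext₀⟩ := extend_partialOrder ((· ≤ ·) : P → P → Prop)
  classical
  let L : P × P → P → P → Prop := fun p =>
    if h : p.1 ≤ p.2 then s₀ else (exists_linear_ext_block h).choose
  refine ⟨L, ?_, ?_⟩
  · intro p
    by_cases h : p.1 ≤ p.2
    · simpa [L, h] using hs₀
    · simpa [L, h] using (exists_linear_ext_block h).choose_spec.1
  · intro a b
    constructor
    · intro hab p
      by_cases h : p.1 ≤ p.2
      · simpa [L, h] using hext₀ _ _ hab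
      · simpa [L, h] using (exists_linear_ext_block h).choose_spec.2.1 _ _ hab
    · intro hall
      by_contra hab
      have := hall (a, b)
      simp only [L, dif_neg hab] at this
      exact (exists_linear_ext_block hab).choose_spec.2.2 this

end aux

/-- If a partial order contains a strongly independent antichain S, then its
order dimension is at least |S|. -/
theorem stmt16 {P : Type u} [PartialOrder P] (S : Set P)
    (hanti : IsAntichain (· ≤ ·) S)
    (hstrong : ∀ T ⊆ S, #(↥T) < #(↥S) → ∀ x ∈ S \ T,
      ∃ y : P, (∀ t ∈ T, t ≤ y) ∧ ¬ x ≤ y) :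
    #(↥S) ≤ orderDim P := by
  classical
  have hne : { c | ∃ (ι : Type u) (L : ι → P → P → Prop), #ι = c ∧ IsRealizer P L }.Nonempty := by
    obtain ⟨L, hL⟩ := exists_realizer_s16 (P := P)
    exact ⟨#(P × P), P × P, L, rfl, hL⟩
  refine le_csInf hne ?_
  rintro c ⟨ι, L, rfl, hlin, hiff⟩
  by_contra hlt
  push_neg at hlt
  -- hlt : #ι < #S
  -- the set of L i-maximum elements of S
  let M : ι → Set P := fun i => {x | x ∈ S ∧ ∀ t ∈ S, x ≠ t → ¬ L i x t}
  have hMsub : ∀ i, (M i).Subsingleton := by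
    intro i a ha b hb
    by_contra hab
    rcases (hlin i).total a b with h | h
    · exact ha.2 b hb.1 hab h
    · exact hb.2 a ha.1 (Ne.symm hab) h
  have hcard : #(↥(⋃ i, M i)) < #(↥S) := by
    calc #(↥(⋃ i, M i)) ≤ #ι * ⨆ i, #(↥(M i)) := Cardinal.mk_iUnion_le M
    _ ≤ #ι * 1 := by
        apply mul_le_mul_right
        apply ciSup_le'
        intro i
        exact Cardinal.mk_le_one_iff_set_subsingleton.2 (hMsub i)
    _ = #ι := mul_one _
    _ < #(↥S) := hlt
  have hex : ∃ x ∈ S, x ∉ ⋃ i, M i := by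
    by_contra h
    push_neg at h
    exact absurd (Cardinal.mk_le_mk_of_subset h) (not_le.2 hcard)
  obtain ⟨x, hxS, hxM⟩ := hex
  simp only [Set.mem_iUnion, not_exists] at hxM
  have hpick : ∀ i, ∃ t, t ∈ S ∧ x ≠ t ∧ L i x t := by
    intro i
    have := hxM i
    simp only [M, Set.mem_setOf_eq, not_and, not_forall] at this
    obtain ⟨t, ht, hne', hLi⟩ := this hxS
    exact ⟨t, ht, hne', not_not.1 hLi⟩
  choose t htS htne htL using hpick
  let T : Set P := Set.range t
  have hTS : T ⊆ S := by rintro _ ⟨i, rfl⟩; exact htS i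
  have hTcard : #(↥T) < #(↥S) := lt_of_le_of_lt Cardinal.mk_range_le hlt
  have hxT : x ∉ T := by rintro ⟨i, rfl⟩; exact htne i rfl
  obtain ⟨y, hub, hxy⟩ := hstrong T hTS hTcard x ⟨hxS, hxT⟩
  have : ∃ i, ¬ L i x y := by
    by_contra h
    push_neg at h
    exact hxy ((hiff x y).2 h)
  obtain ⟨i, hi⟩ := this
  have hty : L i (t i) y := (hiff _ _).1 (hub _ ⟨i, rfl⟩) i
  exact hi ((hlin i).trans _ _ _ (htL i) hty)
end

section
/- Let P = {{α} : α < ω₁} ∪ {{γ : γ < β} \ {α} : α, β < ω₁}, a family of subsets of ω₁ ordered by strict inclusion. Then {{α} : α < ω₁} is a strongly independent antichain in (P, ⊊) of cardinality ℵ₁; consequently the order dimension of (P, ⊊) is at least ℵ₁. -/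
open Cardinal

universe u

/-- ω₁ as a linearly ordered type. -/
abbrev Om1 : Type 1 := {o : Ordinal.{0} // o < (Cardinal.aleph 1).ord}

/-- The family P = {{α} : α < ω₁} ∪ {Iio β \ {α} : α, β < ω₁}, ordered by
inclusion. -/
abbrev Pfam : Set (Set Om1) :=
  {A | ∃ α : Om1, A = {α}} ∪ {A | ∃ α β : Om1, A = Set.Iio β \ {α}}

namespace Stmt17Aux

/-- The singleton element of `Pfam`. -/
def X (α : Om1) : ↥Pfam := ⟨{α}, Or.inl ⟨α, rfl⟩⟩

/-- The element `Iio β \ {α}` of `Pfam`. -/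
def D (α β : Om1) : ↥Pfam := ⟨Set.Iio β \ {α}, Or.inr ⟨α, β, rfl⟩⟩

lemma X_injective : Function.Injective X := by
  intro a b h
  have h2 : ({a} : Set Om1) = {b} := congrArg Subtype.val h
  simpa using h2

lemma not_X_le_D (α β : Om1) : ¬ X α ≤ D α β := by
  intro h
  have h2 : ({α} : Set Om1) ⊆ Set.Iio β \ {α} := h
  exact (h2 (Set.mem_singleton α)).2 rfl

lemma X_le_D {α' α β : Om1} (hne : α' ≠ α) (hlt : α' < β) : X α' ≤ D α β := by
  show ({α'} : Set Om1) ⊆ Set.Iio β \ {α}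
  rw [Set.singleton_subset_iff]
  exact ⟨hlt, hne⟩

lemma mk_Om1 : #Om1 = Cardinal.aleph 1 := by
  have h := Ordinal.mk_Iio_ordinal ((Cardinal.aleph 1).ord)
  rw [Cardinal.card_ord] at h
  calc #Om1 = #(Set.Iio ((Cardinal.aleph 1).ord)) := rfl
    _ = Cardinal.lift.{1} (Cardinal.aleph 1) := h
    _ = Cardinal.aleph 1 := by rw [Cardinal.lift_aleph, Ordinal.lift_one]

lemma exists_bound {ι : Type 1} (f : ι → Om1) (h : #ι < Cardinal.aleph 1) :
    ∃ β : Om1, ∀ i, f i < β := by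
  have hcof : #ι < (Ordinal.lift.{1,0} ((Cardinal.aleph 1).ord)).cof := by
    rw [Cardinal.lift_ord, Cardinal.lift_aleph, Ordinal.lift_one,
      Cardinal.isRegular_aleph_one.cof_eq]
    exact h
  have hlt : ∀ i, Ordinal.lift.{1,0} (f i).1 < Ordinal.lift.{1,0} ((Cardinal.aleph 1).ord) :=
    fun i => Ordinal.lift_lt.2 (f i).2
  have hl := Ordinal.lsub_lt_ord hcof hlt
  obtain ⟨b, hb, hbe⟩ := Ordinal.lt_lift_iff.1 hl
  refine ⟨⟨b, hb⟩, fun i => ?_⟩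
  have h2 := Ordinal.lt_lsub.{1,1} (fun i => Ordinal.lift.{1,0} (f i).1) i
  rw [← hbe] at h2
  exact Subtype.coe_lt_coe.1 (Ordinal.lift_lt.1 h2)

end Stmt17Aux

open Stmt17Aux

/-- The singletons form a strongly independent antichain of size ℵ₁ in Pfam,
and hence the order dimension of Pfam (under inclusion) is at least ℵ₁. -/
theorem stmt17 :
    (IsAntichain (· ≤ ·) {x : ↥Pfam | ∃ α : Om1, (x : Set Om1) = {α}}) ∧
    #(↥{x : ↥Pfam | ∃ α : Om1, (x : Set Om1) = {α}}) = Cardinal.aleph 1 ∧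
    (∀ T ⊆ {x : ↥Pfam | ∃ α : Om1, (x : Set Om1) = {α}},
      #(↥T) < Cardinal.aleph 1 →
      ∀ x ∈ {x : ↥Pfam | ∃ α : Om1, (x : Set Om1) = {α}} \ T,
        ∃ y : ↥Pfam, (∀ t ∈ T, t ≤ y) ∧ ¬ x ≤ y) ∧
    Cardinal.aleph 1 ≤ orderDim ↥Pfam := by
  refine ⟨?_, ?_, ?_, ?_⟩
  · -- antichain
    rintro a ⟨α, hα⟩ b ⟨β, hβ⟩ hne hle
    have h2 : (a : Set Om1) ⊆ (b : Set Om1) := hle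
    rw [hα, hβ, Set.singleton_subset_iff, Set.mem_singleton_iff] at h2
    exact hne (Subtype.ext (by rw [hα, hβ, h2]))
  · -- cardinality
    rw [← mk_Om1]
    refine (Cardinal.mk_congr (Equiv.ofBijective
      (fun α => ⟨X α, ⟨α, rfl⟩⟩) ⟨?_, ?_⟩)).symm
    · intro a b h
      exact X_injective (congrArg Subtype.val h)
    · rintro ⟨x, α, hα⟩
      exact ⟨α, Subtype.ext (Subtype.ext hα.symm)⟩
  · -- strong independence
    rintro T hT hTcard x ⟨⟨α, hα⟩, hxT⟩
    have hf : ∀ t : ↥T, ∃ γ : Om1, ((t : ↥Pfam) : Set Om1) = {γ} := fun t => hT t.2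
    choose g hg using hf
    obtain ⟨β, hβ⟩ := exists_bound g hTcard
    refine ⟨D α β, ?_, ?_⟩
    · intro t ht
      have h1 := hg ⟨t, ht⟩
      have hne : g ⟨t, ht⟩ ≠ α := by
        intro he
        apply hxT
        have : (t : Set Om1) = (x : Set Om1) := by rw [h1, he, hα]
        rwa [Subtype.ext this] at ht
      show (t : Set Om1) ⊆ Set.Iio β \ {α}
      rw [h1, Set.singleton_subset_iff]
      exact ⟨hβ ⟨t, ht⟩, hne⟩
    · intro h
      have h2 : (x : Set Om1) ⊆ Set.Iio β \ {α} := h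
      rw [hα, Set.singleton_subset_iff] at h2
      exact h2.2 rfl
  · -- dimension bound
    refine le_csInf ?_ ?_
    · -- a realizer exists: all linear extensions
      refine ⟨#{s : ↥Pfam → ↥Pfam → Prop // IsLinearOrder ↥Pfam s ∧ ∀ a b : ↥Pfam, a ≤ b → s a b},
        _, fun s => s.1, rfl, fun i => i.2.1, fun x y => ⟨fun h i => i.2.2 x y h, fun h => ?_⟩⟩
      by_contra hxy
      set r : ↥Pfam → ↥Pfam → Prop := fun a b => a ≤ b ∨ (a ≤ y ∧ x ≤ b) with hr
      haveI : IsPartialOrder ↥Pfam r :=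
        { refl := fun a => Or.inl le_rfl
          trans := by
            rintro a b c (hab | ⟨hay, hxb⟩) (hbc | ⟨hby, hxc⟩)
            · exact Or.inl (hab.trans hbc)
            · exact Or.inr ⟨hab.trans hby, hxc⟩
            · exact Or.inr ⟨hay, hxb.trans hbc⟩
            · exact absurd (hxb.trans hby) hxy
          antisymm := by
            rintro a b (hab | ⟨hay, hxb⟩) (hba | ⟨hby, hxa⟩)
            · exact le_antisymm hab hba
            · exact absurd (hxa.trans (hab.trans hby)) hxy
            · exact absurd (hxb.trans (hba.trans hay)) hxy
            · exact absurd (hxb.trans hby) hxy }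
      obtain ⟨s, hs, hrs⟩ := extend_partialOrder r
      have hyx : s y x := hrs _ _ (Or.inr ⟨le_rfl, le_rfl⟩)
      have hxy' : s x y := h ⟨s, hs, fun a b hab => hrs _ _ (Or.inl hab)⟩
      haveI := hs
      exact hxy ((antisymm hxy' hyx) ▸ le_rfl)
    · -- every realizer has size at least ℵ₁
      rintro c ⟨ι, L, rfl, hlin, hiff⟩
      by_contra hlt
      push_neg at hlt
      have claim : ∀ α : Om1, ∃ i : ι, ∀ b : Om1, ∃ β : Om1,
          b < β ∧ ¬ L i (X α) (D α β) := by
        intro α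
        by_contra hcl
        push_neg at hcl
        choose bnd hbnd using hcl
        obtain ⟨β, hβ⟩ := exists_bound bnd hlt
        exact not_X_le_D α β ((hiff _ _).2 fun i => hbnd i β (hβ i))
      choose g hspec using claim
      have hninj : ¬ Function.Injective g := by
        intro hinj
        have := Cardinal.mk_le_of_injective hinj
        rw [mk_Om1] at this
        exact (this.trans_lt hlt).false
      rw [Function.not_injective_iff] at hninj
      obtain ⟨α, α', hgeq, hne⟩ := hninj
      obtain ⟨β, hβ1, hβ2⟩ := hspec α α'
      obtain ⟨β', hβ'1, hβ'2⟩ := hspec α' α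
      rw [← hgeq] at hβ'2
      haveI := hlin (g α)
      have h1 : L (g α) (D α β) (X α) := (total_of (L (g α)) _ _).resolve_left hβ2
      have h2 : L (g α) (D α' β') (X α') := (total_of (L (g α)) _ _).resolve_left hβ'2
      have h3 : L (g α) (X α') (D α β) := (hiff _ _).1 (X_le_D hne.symm hβ1) (g α)
      have h4 : L (g α) (X α) (D α' β') := (hiff _ _).1 (X_le_D hne hβ'1) (g α)
      have t1 : L (g α) (X α') (X α) := _root_.trans h3 h1
      have t2 : L (g α) (X α) (X α') := _root_.trans h4 h2
      exact hne (X_injective (antisymm t2 t1))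
end

section
/- Let (P, ≤) be a partial order. The order dimension of the poset of initial segments (downward-closed subsets) of P ordered by inclusion equals the chain covering number of P, i.e., the least cardinality of a set 𝒞 of chains of P with ⋃𝒞 = P (for P infinite or of chain covering number at least 2). -/
open Cardinal

universe u

/-- The chain covering number: the least cardinality of a family of chains
covering P. -/
noncomputable def chainCoverNum (P : Type u) [PartialOrder P] : Cardinal.{u} :=
  sInf { c | ∃ 𝒞 : Set (Set P), #(↥𝒞) = c ∧ (∀ C ∈ 𝒞, IsChain (· ≤ ·) C) ∧ ⋃₀ 𝒞 = Set.univ }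

section Aux

variable {P : Type u} [PartialOrder P]

/-- The poset of initial segments of `P`. -/
abbrev InitSeg' (P : Type u) [PartialOrder P] : Type u :=
  {I : Set P // ∀ ⦃x y : P⦄, x ≤ y → y ∈ I → x ∈ I}

/-- Lower bound: from any realizer of the poset of initial segments we can
extract a chain cover of `P` of no greater cardinality. -/
lemma chainCoverNum_le_of_realizer {ι : Type u} (L : ι → InitSeg' P → InitSeg' P → Prop)
    (hL : IsRealizer (InitSeg' P) L) : chainCoverNum P ≤ #ι := by
  classical
  set dp : P → InitSeg' P := fun p => ⟨{x | x ≤ p}, fun x y hxy hy => hxy.trans hy⟩ with hdp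
  set bp : P → InitSeg' P := fun p => ⟨{x | ¬ p ≤ x}, fun x y hxy hy hpx => hy (hpx.trans hxy)⟩
    with hbp
  set C : ι → Set P := fun i => {p | L i (bp p) (dp p)} with hC
  have hchain : ∀ i, IsChain (· ≤ ·) (C i) := by
    intro i p hp q hq hpq
    haveI := hL.1 i
    by_contra hcon
    push_neg at hcon
    have h1 : dp p ≤ bp q := by
      intro x hx hqx
      exact hcon.2 (hqx.trans hx)
    have h2 : dp q ≤ bp p := by
      intro x hx hpx
      exact hcon.1 (hpx.trans hx)
    have h1' : L i (dp p) (bp q) := ((hL.2 _ _).1 h1) i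
    have h2' : L i (dp q) (bp p) := ((hL.2 _ _).1 h2) i
    have hbig : L i (dp p) (bp p) := trans_of (L i) h1' (trans_of (L i) hq h2')
    have heq : dp p = bp p := antisymm_of (L i) hbig hp
    have : p ∈ (bp p).1 := by rw [← heq]; exact le_refl p
    exact this (le_refl p)
  have hcover : ∀ p : P, ∃ i, p ∈ C i := by
    intro p
    have hnle : ¬ (dp p ≤ bp p) := by
      intro h
      exact h (le_refl p) (le_refl p)
    rw [hL.2] at hnle
    push_neg at hnle
    obtain ⟨i, hi⟩ := hnle
    haveI := hL.1 i
    refine ⟨i, ?_⟩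
    rcases total_of (L i) (dp p) (bp p) with h | h
    · exact absurd h hi
    · exact h
  have hmem : #(↥(Set.range C)) ∈
      { c | ∃ 𝒞 : Set (Set P), #(↥𝒞) = c ∧ (∀ C ∈ 𝒞, IsChain (· ≤ ·) C) ∧ ⋃₀ 𝒞 = Set.univ } := by
    refine ⟨Set.range C, rfl, ?_, ?_⟩
    · rintro _ ⟨i, rfl⟩
      exact hchain i
    · rw [Set.sUnion_range]
      apply Set.eq_univ_iff_forall.2
      intro p
      obtain ⟨i, hi⟩ := hcover p
      exact Set.mem_iUnion.2 ⟨i, hi⟩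
  exact (csInf_le' hmem).trans Cardinal.mk_range_le

lemma key_comparable {𝒞 : Set (Set P)} (h𝒞 : ∀ C ∈ 𝒞, IsChain (· ≤ ·) C)
    (C : ↥𝒞) (I J : InitSeg' P) :
    I.1 ∩ C.1 ≤ J.1 ∩ C.1 ∨ J.1 ∩ C.1 ≤ I.1 ∩ C.1 := by
  by_contra hcon
  push_neg at hcon
  obtain ⟨a, ⟨haI, haC⟩, haJ⟩ := Set.not_subset.1 hcon.1
  obtain ⟨b, ⟨hbJ, hbC⟩, hbI⟩ := Set.not_subset.1 hcon.2
  have haJ' : a ∉ J.1 := fun h => haJ ⟨h, haC⟩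
  have hbI' : b ∉ I.1 := fun h => hbI ⟨h, hbC⟩
  have hab : a ≠ b := fun h => haJ' (h ▸ hbJ)
  rcases h𝒞 C.1 C.2 haC hbC hab with h | h
  · exact haJ' (J.2 h hbJ)
  · exact hbI' (I.2 h haI)

/-- Upper bound: from any chain cover of `P` we get a realizer of the poset of
initial segments indexed by the cover. -/
lemma exists_realizer_of_cover {𝒞 : Set (Set P)} (h𝒞 : ∀ C ∈ 𝒞, IsChain (· ≤ ·) C)
    (hcov : ⋃₀ 𝒞 = Set.univ) :
    ∃ L : ↥𝒞 → InitSeg' P → InitSeg' P → Prop, IsRealizer (InitSeg' P) L := by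
  classical
  obtain ⟨T, hTlin, hText⟩ := extend_partialOrder ((· ≤ ·) : InitSeg' P → InitSeg' P → Prop)
  haveI := hTlin
  set L : ↥𝒞 → InitSeg' P → InitSeg' P → Prop := fun C I J =>
    I.1 ∩ C.1 < J.1 ∩ C.1 ∨ (I.1 ∩ C.1 = J.1 ∩ C.1 ∧ T I J) with hLdef
  refine ⟨L, fun C => ?_, fun I J => ?_⟩
  · have hrefl : ∀ I, L C I I := fun I => Or.inr ⟨rfl, refl_of T I⟩
    have htrans : ∀ I J K, L C I J → L C J K → L C I K := by
      rintro I J K (h1 | ⟨h1, hT1⟩) (h2 | ⟨h2, hT2⟩)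
      · exact Or.inl (h1.trans h2)
      · exact Or.inl (h2 ▸ h1)
      · exact Or.inl (h1 ▸ h2)
      · exact Or.inr ⟨h1.trans h2, trans_of T hT1 hT2⟩
    have hanti : ∀ I J, L C I J → L C J I → I = J := by
      rintro I J (h1 | ⟨h1, hT1⟩) (h2 | ⟨h2, hT2⟩)
      · exact absurd h2 (lt_asymm h1)
      · exact absurd h1 (h2 ▸ lt_irrefl _)
      · exact absurd h2 (h1 ▸ lt_irrefl _)
      · exact antisymm_of T hT1 hT2
    have htot : ∀ I J, L C I J ∨ L C J I := by
      intro I J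
      rcases key_comparable h𝒞 C I J with h | h
      · rcases h.lt_or_eq with h' | h'
        · exact Or.inl (Or.inl h')
        · rcases total_of T I J with hT | hT
          · exact Or.inl (Or.inr ⟨h', hT⟩)
          · exact Or.inr (Or.inr ⟨h'.symm, hT⟩)
      · rcases h.lt_or_eq with h' | h'
        · exact Or.inr (Or.inl h')
        · rcases total_of T I J with hT | hT
          · exact Or.inl (Or.inr ⟨h'.symm, hT⟩)
          · exact Or.inr (Or.inr ⟨h', hT⟩)
    exact { refl := hrefl, trans := htrans, antisymm := hanti, total := htot }
  · constructor
    · intro hIJ C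
      have hsub : I.1 ∩ C.1 ≤ J.1 ∩ C.1 := Set.inter_subset_inter_left _ hIJ
      rcases hsub.lt_or_eq with h | h
      · exact Or.inl h
      · exact Or.inr ⟨h, hText _ _ hIJ⟩
    · intro h x hx
      have hxU : x ∈ ⋃₀ 𝒞 := hcov ▸ Set.mem_univ x
      obtain ⟨Cs, hCs, hxC⟩ := hxU
      have hsub : I.1 ∩ Cs ≤ J.1 ∩ Cs := by
        rcases h ⟨Cs, hCs⟩ with h' | ⟨h', _⟩
        · exact h'.le
        · exact h'.le
      exact (hsub ⟨hx, hxC⟩).1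

end Aux

/-- Pouzet's theorem: the order dimension of the poset of initial segments of
P, ordered by inclusion, equals the chain covering number of P (assuming P is
infinite or has chain covering number at least 2). -/
theorem stmt18 {P : Type u} [PartialOrder P]
    (hside : Infinite P ∨ 2 ≤ chainCoverNum P) :
    orderDim {I : Set P // ∀ ⦃x y : P⦄, x ≤ y → y ∈ I → x ∈ I} =
      chainCoverNum P := by
  classical
  -- the set defining chainCoverNum is nonempty (cover by singletons)
  have hccne : { c | ∃ 𝒞 : Set (Set P), #(↥𝒞) = c ∧ (∀ C ∈ 𝒞, IsChain (· ≤ ·) C) ∧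
      ⋃₀ 𝒞 = Set.univ }.Nonempty := by
    refine ⟨_, Set.range (fun p : P => ({p} : Set P)), rfl, ?_, ?_⟩
    · rintro _ ⟨p, rfl⟩
      exact Set.subsingleton_singleton.isChain
    · rw [Set.sUnion_range]
      exact Set.eq_univ_iff_forall.2 fun p => Set.mem_iUnion.2 ⟨p, rfl⟩
  obtain ⟨𝒞, h𝒞card, h𝒞chain, h𝒞cov⟩ := csInf_mem hccne
  obtain ⟨L, hL⟩ := exists_realizer_of_cover h𝒞chain h𝒞cov
  have hmem : chainCoverNum P ∈
      { c | ∃ (ι : Type u) (L : ι → InitSeg' P → InitSeg' P → Prop),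
        #ι = c ∧ IsRealizer (InitSeg' P) L } := ⟨↥𝒞, L, h𝒞card, hL⟩
  refine le_antisymm (csInf_le' hmem) (le_csInf ⟨_, hmem⟩ ?_)
  rintro c ⟨ι, L', hc, hL'⟩
  exact hc ▸ chainCoverNum_le_of_realizer L' hL'
end
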